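/- arXiv:math/0402116 — 2 statements merged into one kernel-verified Lean document; each statement's English description precedes it below -/
import Mathlib

section
/- Let n ≥ 3, let c be a Coxeter element of W, and let G(P_c) be the group presented by generators ⟨w⟩ for w ∈ P_c and relations ⟨w⟩·⟨w'⟩ = ⟨w w'⟩ whenever w, w', w w' ∈ P_c and l_R(w w') = l_R(w) + l_R(w'). Then there is a group homomorphism from the Artin–Tits group B(Ã_{n−1}) to G(P_c) sending σ_i to ⟨s_i⟩ for i = 1,…,n. -/
/-- `w` is an `n`-periodic permutation of `ℤ`. -/
def IsPeriodic (n : ℕ) (w : Equiv.Perm ℤ) : Prop :=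
  ∀ x : ℤ, w (x + n) = w x + n

/-- `n` times the shift of the permutation `w`. -/
noncomputable def shiftSum (n : ℕ) (w : Equiv.Perm ℤ) : ℤ :=
  ∑ x ∈ Finset.Icc (1 : ℤ) (n : ℤ), (w x - x)

/-- Membership in the group `W` of type `Ã_{n-1}`: the `n`-periodic
permutations of `ℤ` of shift `0`. -/
def InAffineW (n : ℕ) (w : Equiv.Perm ℤ) : Prop :=
  IsPeriodic n w ∧ shiftSum n w = 0

/-- `w` is the `n`-periodic transposition `(a, b)`. -/
def IsTransposition (n : ℕ) (a b : ℤ) (w : Equiv.Perm ℤ) : Prop :=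
  (∀ k : ℤ, w (a + k * n) = b + k * n) ∧
  (∀ k : ℤ, w (b + k * n) = a + k * n) ∧
  (∀ x : ℤ, ¬ (n : ℤ) ∣ (x - a) → ¬ (n : ℤ) ∣ (x - b) → w x = x)

/-- `w` is a reflection of `W`. -/
def IsReflection (n : ℕ) (w : Equiv.Perm ℤ) : Prop :=
  ∃ a b : ℤ, ¬ (n : ℤ) ∣ (a - b) ∧ IsTransposition n a b w

/-- The reflection length `l_R` of an element of `W`. -/
noncomputable def reflLength (n : ℕ) (w : Equiv.Perm ℤ) : ℕ :=
  sInf {m | ∃ L : List (Equiv.Perm ℤ), L.length = m ∧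
    (∀ r ∈ L, IsReflection n r) ∧ L.prod = w}

/-- `v ≼ w` : `v` divides `w` with respect to the reflection length. -/
def RDvd (n : ℕ) (v w : Equiv.Perm ℤ) : Prop :=
  reflLength n w = reflLength n v + reflLength n (v⁻¹ * w)

/-- `c` is a Coxeter element of `W` : a product of the Coxeter generators
`s_1, …, s_n` (where `s_i = (i, i+1)`), each occurring exactly once, in some order. -/
def IsCoxeter (n : ℕ) (c : Equiv.Perm ℤ) : Prop :=
  ∃ s : Fin n → Equiv.Perm ℤ,
    (∀ i : Fin n, IsTransposition n ((i : ℤ) + 1) ((i : ℤ) + 2) (s i)) ∧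
    ∃ e : Equiv.Perm (Fin n), c = (List.ofFn (fun j => s (e j))).prod

/-- The defining relations of the Artin–Tits group of type `Ã_{n-1}` :
braid relations `σ_i σ_j σ_i = σ_j σ_i σ_j` for cyclically adjacent indices and
commutation relations `σ_i σ_j = σ_j σ_i` for non-adjacent ones. -/
def affineBraidRels (n : ℕ) : Set (FreeGroup (Fin n)) :=
  {x | ∃ i j : Fin n, ((i : ℕ) + 1) % n = (j : ℕ) ∧
      x = FreeGroup.of i * FreeGroup.of j * FreeGroup.of i *
        (FreeGroup.of j * FreeGroup.of i * FreeGroup.of j)⁻¹} ∪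
  {x | ∃ i j : Fin n, ((i : ℕ) + 1) % n ≠ (j : ℕ) ∧ ((j : ℕ) + 1) % n ≠ (i : ℕ) ∧
      x = FreeGroup.of i * FreeGroup.of j * (FreeGroup.of j * FreeGroup.of i)⁻¹}

/-- The Artin–Tits group `B(Ã_{n-1})`. -/
abbrev AffineBraidGroup (n : ℕ) := PresentedGroup (affineBraidRels n)

/-- The set `P_c` of divisors of `c` in `W`. -/
def PcW (n : ℕ) (c : Equiv.Perm ℤ) : Set (Equiv.Perm ℤ) := {w | RDvd n w c}

/-- The defining relations of the group of fractions `G(P_c)` of the dual monoid. -/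
def dualGroupRels (n : ℕ) (c : Equiv.Perm ℤ) : Set (FreeGroup (PcW n c)) :=
  {x | ∃ (w w' : PcW n c) (h : (w : Equiv.Perm ℤ) * (w' : Equiv.Perm ℤ) ∈ PcW n c),
    reflLength n ((w : Equiv.Perm ℤ) * (w' : Equiv.Perm ℤ)) =
      reflLength n (w : Equiv.Perm ℤ) + reflLength n (w' : Equiv.Perm ℤ) ∧
    x = FreeGroup.of w * FreeGroup.of w' *
      (FreeGroup.of (⟨(w : Equiv.Perm ℤ) * (w' : Equiv.Perm ℤ), h⟩ : PcW n c))⁻¹}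

/-- The group `G(P_c)`, presented by generators `⟨w⟩`, `w ∈ P_c`. -/
abbrev DualGroup (n : ℕ) (c : Equiv.Perm ℤ) := PresentedGroup (dualGroupRels n c)
theorem Equiv.Perm.apply_inv_self {α : Type*} (f : Equiv.Perm α) (x : α) : f (f⁻¹ x) = x :=
  f.apply_symm_apply x

theorem Equiv.Perm.inv_apply_self {α : Type*} (f : Equiv.Perm α) (x : α) : f⁻¹ (f x) = x :=
  f.symm_apply_apply x

section S1

variable {n : ℕ}

abbrev cls (n : ℕ) (x : ℤ) : ZMod n := (x : ZMod n)

lemma cls_eq_iff {x y : ℤ} : cls n x = cls n y ↔ (n:ℤ) ∣ (x - y) := by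
  rw [ZMod.intCast_eq_intCast_iff, Int.modEq_iff_dvd]
  exact dvd_sub_comm

lemma dvd_sub_period {x a : ℤ} : (n:ℤ) ∣ (x + n) - a ↔ (n:ℤ) ∣ x - a :=
  ⟨fun ⟨k, hk⟩ => ⟨k - 1, by linear_combination hk⟩,
   fun ⟨k, hk⟩ => ⟨k + 1, by linear_combination hk⟩⟩

lemma IsPeriodic.add_zsmul {w : Equiv.Perm ℤ} (hw : IsPeriodic n w) (x k : ℤ) :
    w (x + k * n) = w x + k * n := by
  induction k using Int.induction_on with
  | zero => simp
  | succ k ih =>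
      have h1 : x + ((k : ℤ) + 1) * n = (x + k * n) + n := by ring
      rw [h1, hw, ih]; ring
  | pred k ih =>
      have h2 : x + (-(k:ℤ) - 1) * n + n = x + (-(k:ℤ)) * n := by ring
      have h1 := hw (x + (-(k:ℤ) - 1) * n)
      rw [h2, ih] at h1
      linear_combination -h1

lemma IsPeriodic.inv {w : Equiv.Perm ℤ} (hw : IsPeriodic n w) : IsPeriodic n w⁻¹ := by
  intro x
  apply w.injective
  rw [Equiv.Perm.apply_inv_self]
  have := hw (w⁻¹ x)
  rw [Equiv.Perm.apply_inv_self] at this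
  exact this.symm

lemma IsPeriodic.mul {w v : Equiv.Perm ℤ} (hw : IsPeriodic n w) (hv : IsPeriodic n v) :
    IsPeriodic n (w * v) := by
  intro x
  simp only [Equiv.Perm.mul_apply]
  rw [hv, hw]

lemma IsPeriodic.one : IsPeriodic n (1 : Equiv.Perm ℤ) := fun _ => rfl

lemma IsPeriodic.cls_apply {w : Equiv.Perm ℤ} (hw : IsPeriodic n w) {x y : ℤ}
    (h : cls n x = cls n y) : cls n (w x) = cls n (w y) := by
  rw [cls_eq_iff] at h ⊢
  obtain ⟨k, hk⟩ := h
  have hx : x = y + k * n := by linear_combination hk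
  rw [hx, hw.add_zsmul]
  exact ⟨k, by ring⟩

lemma IsPeriodic.disp_congr {w : Equiv.Perm ℤ} (hw : IsPeriodic n w) {x y : ℤ}
    (h : cls n x = cls n y) : w x - x = w y - y := by
  rw [cls_eq_iff] at h
  obtain ⟨k, hk⟩ := h
  have hx : x = y + k * n := by linear_combination hk
  rw [hx, hw.add_zsmul]; ring

section IT

variable {a b : ℤ} {w : Equiv.Perm ℤ}

lemma IsTransposition.apply_a (h : IsTransposition n a b w) {x : ℤ} (hx : (n:ℤ) ∣ x - a) :
    w x = b + (x - a) := by
  obtain ⟨k, hk⟩ := hx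
  have hx2 : x = a + k * n := by linear_combination hk
  rw [hx2, h.1 k]; ring

lemma IsTransposition.apply_b (h : IsTransposition n a b w) {x : ℤ} (hx : (n:ℤ) ∣ x - b) :
    w x = a + (x - b) := by
  obtain ⟨k, hk⟩ := hx
  have hx2 : x = b + k * n := by linear_combination hk
  rw [hx2, h.2.1 k]; ring

lemma IsTransposition.apply_fix (h : IsTransposition n a b w) {x : ℤ} (ha : ¬ (n:ℤ) ∣ x - a)
    (hb : ¬ (n:ℤ) ∣ x - b) : w x = x := h.2.2 x ha hb

lemma IsTransposition.periodic (h : IsTransposition n a b w) : IsPeriodic n w := by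
  intro x
  by_cases ha : (n:ℤ) ∣ x - a
  · rw [h.apply_a ha, h.apply_a (x := x + n) (dvd_sub_period.mpr ha)]; ring
  · by_cases hb : (n:ℤ) ∣ x - b
    · rw [h.apply_b hb, h.apply_b (x := x + n) (dvd_sub_period.mpr hb)]; ring
    · rw [h.apply_fix ha hb,
        h.apply_fix (x := x + n) (fun hc => ha (dvd_sub_period.mp hc))
          (fun hc => hb (dvd_sub_period.mp hc))]

lemma IsTransposition.symm (h : IsTransposition n a b w) : IsTransposition n b a w :=
  ⟨h.2.1, h.1, fun x hb ha => h.2.2 x ha hb⟩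

lemma IsTransposition.mul_self (h : IsTransposition n a b w) : w * w = 1 := by
  ext x
  simp only [Equiv.Perm.mul_apply, Equiv.Perm.one_apply]
  by_cases ha : (n:ℤ) ∣ x - a
  · have hwx := h.apply_a ha
    have hb : (n:ℤ) ∣ w x - b := by
      have : w x - b = x - a := by rw [hwx]; ring
      rw [this]; exact ha
    rw [h.apply_b hb, hwx]; ring
  · by_cases hb : (n:ℤ) ∣ x - b
    · have hwx := h.apply_b hb
      have ha2 : (n:ℤ) ∣ w x - a := by
        have : w x - a = x - b := by rw [hwx]; ring
        rw [this]; exact hb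
      rw [h.apply_a ha2, hwx]; ring
    · rw [h.apply_fix ha hb, h.apply_fix ha hb]

lemma IsTransposition.inv_eq (h : IsTransposition n a b w) : w⁻¹ = w := by
  rw [← mul_eq_one_iff_inv_eq]
  exact h.mul_self

lemma IsTransposition.unique {w' : Equiv.Perm ℤ} (h : IsTransposition n a b w)
    (h' : IsTransposition n a b w') : w = w' := by
  ext x
  by_cases ha : (n:ℤ) ∣ x - a
  · rw [h.apply_a ha, h'.apply_a ha]
  · by_cases hb : (n:ℤ) ∣ x - b
    · rw [h.apply_b hb, h'.apply_b hb]
    · rw [h.apply_fix ha hb, h'.apply_fix ha hb]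

lemma IsTransposition.conj {g : Equiv.Perm ℤ} (h : IsTransposition n a b w)
    (hg : IsPeriodic n g) :
    IsTransposition n (g⁻¹ a) (g⁻¹ b) (g⁻¹ * w * g) := by
  have hgi : IsPeriodic n g⁻¹ := hg.inv
  refine ⟨fun k => ?_, fun k => ?_, fun x hxa hxb => ?_⟩
  · simp only [Equiv.Perm.mul_apply]
    rw [hg.add_zsmul, Equiv.Perm.apply_inv_self, h.1 k, hgi.add_zsmul]
  · simp only [Equiv.Perm.mul_apply]
    rw [hg.add_zsmul, Equiv.Perm.apply_inv_self, h.2.1 k, hgi.add_zsmul]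
  · simp only [Equiv.Perm.mul_apply]
    have hga : ¬ (n:ℤ) ∣ g x - a := by
      rintro ⟨k, hk⟩
      apply hxa
      have h1 : g x = a + k * n := by linear_combination hk
      have h2 := hgi.add_zsmul a k
      have h3 : x = g⁻¹ a + k * n := by
        rw [← h2, ← h1, Equiv.Perm.inv_apply_self]
      exact ⟨k, by linear_combination h3⟩
    have hgb : ¬ (n:ℤ) ∣ g x - b := by
      rintro ⟨k, hk⟩
      apply hxb
      have h1 : g x = b + k * n := by linear_combination hk
      have h2 := hgi.add_zsmul b k
      have h3 : x = g⁻¹ b + k * n := by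
        rw [← h2, ← h1, Equiv.Perm.inv_apply_self]
      exact ⟨k, by linear_combination h3⟩
    rw [h.apply_fix hga hgb, Equiv.Perm.inv_apply_self]

lemma conj_not_dvd {g : Equiv.Perm ℤ} (hg : IsPeriodic n g) (hab : ¬ (n:ℤ) ∣ a - b) :
    ¬ (n:ℤ) ∣ g⁻¹ a - g⁻¹ b := by
  rintro ⟨k, hk⟩
  apply hab
  have h1 : g⁻¹ a = g⁻¹ b + k * n := by linear_combination hk
  have h2 := hg.add_zsmul (g⁻¹ b) k
  rw [← h1] at h2
  simp only [Equiv.Perm.apply_inv_self] at h2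
  exact ⟨k, by linear_combination h2⟩

lemma IsReflection.conj {r g : Equiv.Perm ℤ} (h : IsReflection n r) (hg : IsPeriodic n g) :
    IsReflection n (g⁻¹ * r * g) := by
  obtain ⟨a, b, hab, hit⟩ := h
  exact ⟨g⁻¹ a, g⁻¹ b, conj_not_dvd hg hab, hit.conj hg⟩

lemma IsReflection.periodic {r : Equiv.Perm ℤ} (h : IsReflection n r) : IsPeriodic n r := by
  obtain ⟨a, b, _, hit⟩ := h
  exact hit.periodic

end IT

/-- products of reflections -/
def RExpr (n : ℕ) (w : Equiv.Perm ℤ) (m : ℕ) : Prop :=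
  ∃ L : List (Equiv.Perm ℤ), L.length = m ∧ (∀ r ∈ L, IsReflection n r) ∧ L.prod = w

lemma RExpr.reflLength_le {w : Equiv.Perm ℤ} {m : ℕ} (h : RExpr n w m) :
    reflLength n w ≤ m := Nat.sInf_le (by obtain ⟨L, h1, h2, h3⟩ := h; exact ⟨L, h1, h2, h3⟩)

lemma RExpr.min {w : Equiv.Perm ℤ} {m : ℕ} (h : RExpr n w m) :
    RExpr n w (reflLength n w) := by
  have h2 : {m | ∃ L : List (Equiv.Perm ℤ), L.length = m ∧
      (∀ r ∈ L, IsReflection n r) ∧ L.prod = w}.Nonempty := by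
    obtain ⟨L, h1, h2, h3⟩ := h; exact ⟨m, L, h1, h2, h3⟩
  obtain ⟨L, h1, h2, h3⟩ := Nat.sInf_mem h2
  exact ⟨L, h1, h2, h3⟩

lemma RExpr.one : RExpr n 1 0 := ⟨[], rfl, by simp, rfl⟩

lemma RExpr.mul {w v : Equiv.Perm ℤ} {m k : ℕ} (hw : RExpr n w m) (hv : RExpr n v k) :
    RExpr n (w * v) (m + k) := by
  obtain ⟨L1, hl1, hr1, hp1⟩ := hw
  obtain ⟨L2, hl2, hr2, hp2⟩ := hv
  refine ⟨L1 ++ L2, by simp [hl1, hl2], ?_, by rw [List.prod_append, hp1, hp2]⟩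
  intro r hr; rcases List.mem_append.mp hr with h | h
  exacts [hr1 r h, hr2 r h]

lemma listProd_periodic (L : List (Equiv.Perm ℤ)) (h : ∀ r ∈ L, IsPeriodic n r) :
    IsPeriodic n L.prod := by
  induction L with
  | nil => exact IsPeriodic.one
  | cons r t ih =>
      rw [List.prod_cons]
      exact (h r (by simp)).mul (ih fun x hx => h x (by simp [hx]))

lemma RExpr.periodic {w : Equiv.Perm ℤ} {m : ℕ} (h : RExpr n w m) : IsPeriodic n w := by
  obtain ⟨L, _, hr, hp⟩ := h
  rw [← hp]
  exact listProd_periodic L fun r hrr => (hr r hrr).periodic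

lemma RExpr.conj {w g : Equiv.Perm ℤ} {m : ℕ} (h : RExpr n w m) (hg : IsPeriodic n g) :
    RExpr n (g⁻¹ * w * g) m := by
  obtain ⟨L, hl, hr, hp⟩ := h
  refine ⟨L.map (fun r => g⁻¹ * r * g), by simp [hl], ?_, ?_⟩
  · intro r hr'
    obtain ⟨x, hx, rfl⟩ := List.mem_map.mp hr'
    exact (hr x hx).conj hg
  · rw [← hp]
    clear hp hr hl
    induction L with
    | nil => simp
    | cons x t ih => simp only [List.map_cons, List.prod_cons, ih]; group

lemma RExpr.eq_one {w : Equiv.Perm ℤ} (h : RExpr n w 0) : w = 1 := by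
  obtain ⟨L, hl, _, hp⟩ := h
  rw [List.length_eq_zero_iff] at hl
  rw [← hp, hl, List.prod_nil]

lemma RExpr.isReflection {w : Equiv.Perm ℤ} (h : RExpr n w 1) : IsReflection n w := by
  obtain ⟨L, hl, hr, hp⟩ := h
  obtain ⟨r, rfl⟩ := List.length_eq_one_iff.mp hl
  rw [List.prod_cons, List.prod_nil, mul_one] at hp
  rw [← hp]
  exact hr r (by simp)

end S1
section S2

variable {n : ℕ}

/-- canonical representative in `[1, n]` -/
def canRep (n : ℕ) (y : ℤ) : ℤ := (y - 1) % n + 1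

lemma canRep_mem [NeZero n] (y : ℤ) : canRep n y ∈ Finset.Icc (1:ℤ) n := by
  have hn : 0 < (n:ℤ) := by exact_mod_cast Nat.pos_of_ne_zero (NeZero.ne n)
  have h1 := Int.emod_nonneg (y - 1) (b := (n:ℤ)) (by omega)
  have h2 := Int.emod_lt_of_pos (y - 1) hn
  simp only [Finset.mem_Icc, canRep]
  omega

lemma cls_canRep [NeZero n] (y : ℤ) : cls n (canRep n y) = cls n y := by
  have h := Int.mul_ediv_add_emod (y - 1) (n:ℤ)
  rw [cls_eq_iff]
  refine ⟨-((y-1)/n), ?_⟩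
  simp only [canRep]
  linear_combination h

lemma cls_val [NeZero n] (v : ZMod n) : cls n ((v.val : ℕ) : ℤ) = v := by
  have : (((v.val : ℕ) : ℤ) : ZMod n) = ((v.val : ℕ) : ZMod n) := by push_cast; ring
  rw [cls, this, ZMod.natCast_val, ZMod.cast_id]

lemma icc_cls_inj [NeZero n] {x y : ℤ} (hx : x ∈ Finset.Icc (1:ℤ) n)
    (hy : y ∈ Finset.Icc (1:ℤ) n) (h : cls n x = cls n y) : x = y := by
  rw [cls_eq_iff] at h
  obtain ⟨k, hk⟩ := h
  simp only [Finset.mem_Icc] at hx hy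
  have hn : 0 < (n:ℤ) := by omega
  have hx2 : x = y + n * k := by linear_combination hk
  have hk1 : k < 1 := by
    by_contra hc
    push_neg at hc
    nlinarith
  have hk2 : -1 < k := by
    by_contra hc
    push_neg at hc
    nlinarith
  have hk0 : k = 0 := by omega
  rw [hk0, mul_zero, add_zero] at hx2
  omega

lemma exists_icc_rep [NeZero n] (v : ZMod n) :
    ∃ x : ℤ, x ∈ Finset.Icc (1:ℤ) n ∧ cls n x = v :=
  ⟨canRep n (v.val : ℕ), canRep_mem _, by rw [cls_canRep, cls_val]⟩

/-- the induced permutation of classes -/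
def piP [NeZero n] {w : Equiv.Perm ℤ} (hw : IsPeriodic n w) : Equiv.Perm (ZMod n) where
  toFun v := cls n (w ((v.val : ℕ) : ℤ))
  invFun v := cls n (w⁻¹ ((v.val : ℕ) : ℤ))
  left_inv v := by
    dsimp only
    have h1 : cls n (((cls n (w ((v.val : ℕ) : ℤ))).val : ℕ) : ℤ)
        = cls n (w ((v.val : ℕ) : ℤ)) := cls_val _
    have h2 := hw.inv.cls_apply h1
    rw [h2, ← Equiv.Perm.mul_apply, inv_mul_cancel, Equiv.Perm.one_apply, cls_val]
  right_inv v := by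
    dsimp only
    have h1 : cls n (((cls n (w⁻¹ ((v.val : ℕ) : ℤ))).val : ℕ) : ℤ)
        = cls n (w⁻¹ ((v.val : ℕ) : ℤ)) := cls_val _
    have h2 := hw.cls_apply h1
    rw [h2, ← Equiv.Perm.mul_apply, mul_inv_cancel, Equiv.Perm.one_apply, cls_val]

lemma piP_cls [NeZero n] {w : Equiv.Perm ℤ} (hw : IsPeriodic n w) (x : ℤ) :
    piP hw (cls n x) = cls n (w x) := by
  show cls n (w (((cls n x).val : ℕ) : ℤ)) = cls n (w x)
  exact hw.cls_apply (cls_val _)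

lemma piP_mul [NeZero n] {w v : Equiv.Perm ℤ} (hw : IsPeriodic n w) (hv : IsPeriodic n v) :
    piP (hw.mul hv) = piP hw * piP hv := by
  ext u
  have h0 : u = cls n ((u.val : ℕ) : ℤ) := (cls_val u).symm
  rw [h0]
  simp only [Equiv.Perm.mul_apply, piP_cls]

lemma piP_one [NeZero n] : piP (n := n) (IsPeriodic.one) = 1 := by
  ext u
  have h0 : u = cls n ((u.val : ℕ) : ℤ) := (cls_val u).symm
  rw [h0]
  simp only [piP_cls, Equiv.Perm.one_apply]

lemma piP_congr [NeZero n] {w w' : Equiv.Perm ℤ} (hw : IsPeriodic n w)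
    (hw' : IsPeriodic n w') (h : w = w') : piP hw = piP hw' := by
  subst h; rfl

lemma piP_refl [NeZero n] {a b : ℤ} {r : Equiv.Perm ℤ} (hr : IsTransposition n a b r) :
    piP hr.periodic = Equiv.swap (cls n a) (cls n b) := by
  ext u
  have hu : u = cls n ((u.val : ℕ) : ℤ) := (cls_val u).symm
  set x : ℤ := ((u.val : ℕ) : ℤ) with hx
  rw [hu, piP_cls]
  by_cases ha : cls n x = cls n a
  · have hd := cls_eq_iff.mp ha
    rw [hr.apply_a hd, ha, Equiv.swap_apply_left, cls_eq_iff]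
    obtain ⟨k, hk⟩ := hd
    exact ⟨k, by linear_combination hk⟩
  · by_cases hb : cls n x = cls n b
    · have hd := cls_eq_iff.mp hb
      rw [hr.apply_b hd, hb, Equiv.swap_apply_right, cls_eq_iff]
      obtain ⟨k, hk⟩ := hd
      exact ⟨k, by linear_combination hk⟩
    · rw [hr.apply_fix (fun hc => ha (cls_eq_iff.mpr hc)) (fun hc => hb (cls_eq_iff.mpr hc)),
        Equiv.swap_apply_of_ne_of_ne ha hb]

lemma sign_listProd_refl [NeZero n] (L : List (Equiv.Perm ℤ))
    (h : ∀ r ∈ L, IsReflection n r) (hL : IsPeriodic n L.prod) :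
    Equiv.Perm.sign (piP hL) = (-1) ^ L.length := by
  induction L with
  | nil =>
      rw [piP_congr hL IsPeriodic.one List.prod_nil, piP_one]
      simp
  | cons r t ih =>
      have hr : IsReflection n r := h r (by simp)
      have ht : ∀ x ∈ t, IsReflection n x := fun x hx => h x (by simp [hx])
      have hrp : IsPeriodic n r := hr.periodic
      have htp : IsPeriodic n t.prod := listProd_periodic t fun x hx => (ht x hx).periodic
      rw [piP_congr hL (hrp.mul htp) List.prod_cons, piP_mul hrp htp, map_mul, ih ht htp]
      obtain ⟨a, b, hab, hit⟩ := hr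
      have h2 : piP hrp = Equiv.swap (cls n a) (cls n b) := piP_refl hit
      rw [h2, Equiv.Perm.sign_swap (by rw [Ne, cls_eq_iff]; exact hab)]
      rw [List.length_cons, pow_succ, mul_comm]

end S2
section S3

variable {n : ℕ}

open Classical in
/-- localized shift sum -/
noncomputable def sigS (n : ℕ) (S : Set (ZMod n)) (w : Equiv.Perm ℤ) : ℤ :=
  ∑ x ∈ Finset.Icc (1:ℤ) (n:ℤ), if cls n x ∈ S then w x - x else 0

lemma sigS_eq_filter (S : Set (ZMod n)) (w : Equiv.Perm ℤ) [DecidablePred (· ∈ S)] :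
    sigS n S w = ∑ x ∈ (Finset.Icc (1:ℤ) (n:ℤ)).filter (fun x => cls n x ∈ S), (w x - x) := by
  rw [Finset.sum_filter]
  unfold sigS
  apply Finset.sum_congr rfl
  intro x _
  by_cases h : cls n x ∈ S
  · rw [if_pos h, if_pos h]
  · rw [if_neg h, if_neg h]

lemma sigS_mul [NeZero n] {S : Set (ZMod n)} {w v : Equiv.Perm ℤ} (hw : IsPeriodic n w)
    (hv : IsPeriodic n v) (hvS : ∀ x : ℤ, cls n x ∈ S → cls n (v x) ∈ S) :
    sigS n S (w * v) = sigS n S w + sigS n S v := by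
  classical
  rw [sigS_eq_filter, sigS_eq_filter, sigS_eq_filter]
  set F := (Finset.Icc (1:ℤ) (n:ℤ)).filter (fun x => cls n x ∈ S) with hF
  have hmemF : ∀ x : ℤ, x ∈ F ↔ (x ∈ Finset.Icc (1:ℤ) (n:ℤ) ∧ cls n x ∈ S) := by
    intro x; rw [hF, Finset.mem_filter]
  have key : ∑ x ∈ F, (w (v x) - v x) = ∑ x ∈ F, (w x - x) := by
    have hinj : Set.InjOn (fun x => canRep n (v x)) F := by
      intro x hx y hy hxy
      simp only at hxy
      have h1 : cls n (v x) = cls n (v y) := by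
        rw [← cls_canRep (n := n) (v x), ← cls_canRep (n := n) (v y), hxy]
      have h2 := hv.inv.cls_apply h1
      simp only [Equiv.Perm.inv_apply_self] at h2
      exact icc_cls_inj ((hmemF x).mp hx).1 ((hmemF y).mp hy).1 h2
    have hsub : F.image (fun x => canRep n (v x)) ⊆ F := by
      intro y hy
      obtain ⟨x, hx, rfl⟩ := Finset.mem_image.mp hy
      rw [hmemF]
      exact ⟨canRep_mem _, by rw [cls_canRep]; exact hvS x ((hmemF x).mp hx).2⟩
    have himg : F.image (fun x => canRep n (v x)) = F :=
      Finset.eq_of_subset_of_card_le hsub (by rw [Finset.card_image_of_injOn hinj])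
    calc ∑ x ∈ F, (w (v x) - v x)
        = ∑ x ∈ F, (w (canRep n (v x)) - canRep n (v x)) := by
          refine Finset.sum_congr rfl fun x _ => ?_
          exact (hw.disp_congr (cls_canRep (n := n) (v x))).symm
      _ = ∑ y ∈ F.image (fun x => canRep n (v x)), (w y - y) := by
          rw [Finset.sum_image (fun x hx y hy h => hinj hx hy h)]
      _ = ∑ x ∈ F, (w x - x) := by rw [himg]
  calc ∑ x ∈ F, ((w * v) x - x)
      = ∑ x ∈ F, ((w (v x) - v x) + (v x - x)) := by
        refine Finset.sum_congr rfl fun x _ => ?_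
        simp only [Equiv.Perm.mul_apply]; ring
    _ = ∑ x ∈ F, (w (v x) - v x) + ∑ x ∈ F, (v x - x) := Finset.sum_add_distrib
    _ = ∑ x ∈ F, (w x - x) + ∑ x ∈ F, (v x - x) := by rw [key]

lemma IsTransposition.preserves {S : Set (ZMod n)} {a b : ℤ} {r : Equiv.Perm ℤ}
    (hr : IsTransposition n a b r) (hS : cls n a ∈ S ↔ cls n b ∈ S) :
    ∀ x : ℤ, cls n x ∈ S → cls n (r x) ∈ S := by
  intro x hx
  by_cases ha : cls n x = cls n a
  · have hd := cls_eq_iff.mp ha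
    rw [hr.apply_a hd]
    have : cls n (b + (x - a)) = cls n b := by
      rw [cls_eq_iff]
      obtain ⟨k, hk⟩ := hd
      exact ⟨k, by linear_combination hk⟩
    rw [this]
    exact hS.mp (ha ▸ hx)
  · by_cases hb : cls n x = cls n b
    · have hd := cls_eq_iff.mp hb
      rw [hr.apply_b hd]
      have : cls n (a + (x - b)) = cls n a := by
        rw [cls_eq_iff]
        obtain ⟨k, hk⟩ := hd
        exact ⟨k, by linear_combination hk⟩
      rw [this]
      exact hS.mpr (hb ▸ hx)
    · rw [hr.apply_fix (fun hc => ha (cls_eq_iff.mpr hc)) (fun hc => hb (cls_eq_iff.mpr hc))]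
      exact hx

lemma sigS_refl_zero [NeZero n] {S : Set (ZMod n)} {a b : ℤ} {r : Equiv.Perm ℤ}
    (hr : IsTransposition n a b r) (hab : ¬ (n:ℤ) ∣ (a - b))
    (hS : cls n a ∈ S ↔ cls n b ∈ S) : sigS n S r = 0 := by
  classical
  rw [sigS_eq_filter]
  set F := (Finset.Icc (1:ℤ) (n:ℤ)).filter (fun x => cls n x ∈ S) with hF
  have hmemF : ∀ x : ℤ, x ∈ F ↔ (x ∈ Finset.Icc (1:ℤ) (n:ℤ) ∧ cls n x ∈ S) := by
    intro x; rw [hF, Finset.mem_filter]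
  by_cases hain : cls n a ∈ S
  · have hbin : cls n b ∈ S := hS.mp hain
    set xa := canRep n a with hxa
    set xb := canRep n b with hxb
    have hxaF : xa ∈ F := (hmemF xa).mpr ⟨canRep_mem _, by rw [hxa, cls_canRep]; exact hain⟩
    have hxbF : xb ∈ F := (hmemF xb).mpr ⟨canRep_mem _, by rw [hxb, cls_canRep]; exact hbin⟩
    have hne : xa ≠ xb := by
      intro hcon
      apply hab
      rw [← cls_eq_iff]
      rw [← cls_canRep (n := n) a, ← cls_canRep (n := n) b, ← hxa, ← hxb, hcon]
    have hzero : ∀ x ∈ F, x ≠ xa ∧ x ≠ xb → r x - x = 0 := by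
      intro x hx ⟨hna, hnb⟩
      have hxicc := ((hmemF x).mp hx).1
      have hca : cls n x ≠ cls n a := by
        intro hcon
        exact hna (icc_cls_inj hxicc (canRep_mem _) (by rw [hcon, cls_canRep]))
      have hcb : cls n x ≠ cls n b := by
        intro hcon
        exact hnb (icc_cls_inj hxicc (canRep_mem _) (by rw [hcon, cls_canRep]))
      rw [hr.apply_fix (fun hc => hca (cls_eq_iff.mpr hc)) (fun hc => hcb (cls_eq_iff.mpr hc))]
      ring
    rw [Finset.sum_eq_add_of_mem xa xb hxaF hxbF hne hzero]
    have hda : (n:ℤ) ∣ xa - a := cls_eq_iff.mp (by rw [hxa, cls_canRep])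
    have hdb : (n:ℤ) ∣ xb - b := cls_eq_iff.mp (by rw [hxb, cls_canRep])
    rw [hr.apply_a hda, hr.apply_b hdb]
    ring
  · have hbout : cls n b ∉ S := fun hb => hain (hS.mpr hb)
    apply Finset.sum_eq_zero
    intro x hx
    obtain ⟨hxicc, hxS⟩ := (hmemF x).mp hx
    have hca : cls n x ≠ cls n a := fun hcon => hain (hcon ▸ hxS)
    have hcb : cls n x ≠ cls n b := fun hcon => hbout (hcon ▸ hxS)
    rw [hr.apply_fix (fun hc => hca (cls_eq_iff.mpr hc)) (fun hc => hcb (cls_eq_iff.mpr hc))]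
    ring

/-- compatibility of a reflection with a coloring -/
def Compat (n : ℕ) (f : ZMod n → ZMod n) (r : Equiv.Perm ℤ) : Prop :=
  ∃ a b : ℤ, ¬ (n:ℤ) ∣ (a - b) ∧ IsTransposition n a b r ∧ f (cls n a) = f (cls n b)

lemma exists_coloring [NeZero n] (L : List (Equiv.Perm ℤ)) (h : ∀ r ∈ L, IsReflection n r) :
    ∃ f : ZMod n → ZMod n, (∀ r ∈ L, Compat n f r) ∧
      n ≤ (Finset.image f Finset.univ).card + L.length := by
  classical
  induction L with
  | nil =>
      refine ⟨id, by simp, ?_⟩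
      simp [Finset.image_id, ZMod.card n]
  | cons r t ih =>
      obtain ⟨f, hf1, hf2⟩ := ih (fun x hx => h x (by simp [hx]))
      obtain ⟨a, b, hab, hit⟩ := h r (by simp)
      by_cases heq : f (cls n a) = f (cls n b)
      · refine ⟨f, ?_, by rw [List.length_cons]; omega⟩
        intro r' hr'
        rcases List.mem_cons.mp hr' with rfl | hmem
        · exact ⟨a, b, hab, hit, heq⟩
        · exact hf1 r' hmem
      · set m : ZMod n → ZMod n := fun v => if v = f (cls n a) then f (cls n b) else v with hm
        refine ⟨m ∘ f, ?_, ?_⟩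
        · intro r' hr'
          rcases List.mem_cons.mp hr' with rfl | hmem
          · refine ⟨a, b, hab, hit, ?_⟩
            have h1 : m (f (cls n a)) = f (cls n b) := if_pos rfl
            have h2 : m (f (cls n b)) = f (cls n b) := if_neg (fun hc => heq hc.symm)
            show m (f (cls n a)) = m (f (cls n b))
            rw [h1, h2]
          · obtain ⟨a', b', hab', hit', heq'⟩ := hf1 r' hmem
            exact ⟨a', b', hab', hit', by simp only [Function.comp_apply, heq']⟩
        · have himg : Finset.image (m ∘ f) Finset.univ = Finset.image m (Finset.image f Finset.univ) := by
            rw [Finset.image_image]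
          have hsub : (Finset.image f Finset.univ).erase (f (cls n a)) ⊆
              Finset.image m (Finset.image f Finset.univ) := by
            intro v hv
            obtain ⟨hvne, hvmem⟩ := Finset.mem_erase.mp hv
            exact Finset.mem_image.mpr ⟨v, hvmem, if_neg hvne⟩
          have hmema : f (cls n a) ∈ Finset.image f Finset.univ :=
            Finset.mem_image.mpr ⟨cls n a, Finset.mem_univ _, rfl⟩
          have hcard := Finset.card_le_card hsub
          rw [Finset.card_erase_of_mem hmema] at hcard
          rw [List.length_cons, himg]
          omega

end S3
section S4

variable {n : ℕ}

lemma cls_sub_one (y : ℤ) : cls n (y - 1) = cls n y - 1 := by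
  simp [cls]

lemma cls_add_nat (y : ℤ) (d : ℕ) : cls n (y + d) = cls n y + d := by
  simp [cls]

lemma not_dvd_one' (hn2 : 2 ≤ n) : ¬ (n:ℤ) ∣ 1 := by
  intro h
  have := Int.le_of_dvd one_pos h
  omega

lemma cls_pred_ne (hn2 : 2 ≤ n) (y : ℤ) : cls n (y - 1) ≠ cls n y := by
  rw [Ne, cls_eq_iff]
  intro h
  have h2 : (n:ℤ) ∣ 1 := (dvd_neg.mp (by rw [show y - 1 - y = -1 by ring] at h; exact h))
  exact not_dvd_one' hn2 h2

/-- position function -/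
def posf (E : Fin n ≃ ZMod n) (y : ℤ) : ℕ := (E.symm (cls n y) : ℕ)

/-- the set of "rightward" classes -/
def Rset (E : Fin n ≃ ZMod n) : Set (ZMod n) :=
  {v | ((E.symm (v - 1) : Fin n) : ℕ) < ((E.symm v : Fin n) : ℕ)}

lemma mem_Rset_iff (E : Fin n ≃ ZMod n) (y : ℤ) :
    cls n y ∈ Rset E ↔ posf E (y - 1) < posf E y := by
  unfold Rset posf
  rw [Set.mem_setOf_eq, cls_sub_one]

lemma posf_lt (E : Fin n ≃ ZMod n) (y : ℤ) : posf E y < n := (E.symm (cls n y)).isLt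

lemma posf_inj (E : Fin n ≃ ZMod n) {y z : ℤ} (h : posf E y = posf E z) :
    cls n y = cls n z := by
  unfold posf at h
  have := Fin.val_injective h
  exact E.symm.injective this

lemma posf_eq_iff (E : Fin n ≃ ZMod n) (y : ℤ) (j : Fin n) :
    posf E y = (j : ℕ) ↔ cls n y = E j := by
  constructor
  · intro h
    have : E.symm (cls n y) = j := Fin.val_injective h
    rw [← this, Equiv.apply_symm_apply]
  · intro h
    unfold posf
    rw [h, Equiv.symm_apply_apply]

variable (t : Fin n → Equiv.Perm ℤ)

/-- the word product -/
def wprod : Equiv.Perm ℤ := (List.ofFn t).prod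

lemma wprod_periodic (ht : ∀ j, IsPeriodic n (t j)) : IsPeriodic n (wprod t) := by
  apply listProd_periodic
  intro r hr
  have h2 := List.mem_ofFn.mp hr
  obtain ⟨j, rfl⟩ := h2
  exact ht j

/-- suffix products -/
def sfx (j : ℕ) : Equiv.Perm ℤ := ((List.ofFn t).drop j).prod

lemma sfx_zero : sfx t 0 = wprod t := rfl

lemma sfx_n : sfx t n = 1 := by
  unfold sfx
  rw [List.drop_eq_nil_of_le (by simp), List.prod_nil]

lemma sfx_step {j : ℕ} (hj : j < n) : sfx t j = t ⟨j, hj⟩ * sfx t (j + 1) := by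
  unfold sfx
  have hlen : j < (List.ofFn t).length := by simp [hj]
  rw [List.drop_eq_getElem_cons hlen, List.prod_cons, List.getElem_ofFn]

variable {t}

theorem walk_eval [NeZero n] (hn2 : 2 ≤ n) (ℓ : Fin n → ℤ)
    (hIT : ∀ j, IsTransposition n (ℓ j) (ℓ j + 1) (t j))
    (E : Fin n ≃ ZMod n) (hE : ∀ j, cls n (ℓ j) = E j)
    (x : ℤ) (hx : cls n x ∈ Rset E) (k : ℕ) (hk : 0 < k)
    (hmin : ∀ d : ℕ, 0 < d → d < k → cls n (x + d) ∉ Rset E)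
    (hend : cls n (x + k) ∈ Rset E) :
    wprod t x = x + k := by
  classical
  -- hypotheses in terms of posf
  have hxR : posf E (x - 1) < posf E x := (mem_Rset_iff E x).mp hx
  have hendR : posf E (x + k - 1) < posf E (x + k) := by
    have := (mem_Rset_iff E (x + k)).mp hend
    exact this
  have chain : ∀ d : ℕ, 1 ≤ d → d < k → posf E (x + d) < posf E (x + d - 1) := by
    intro d h1 h2
    have hnR := hmin d h1 h2
    rw [mem_Rset_iff] at hnR
    push_neg at hnR
    rcases lt_or_eq_of_le hnR with h | h
    · exact h
    · exfalso
      exact cls_pred_ne hn2 (x + d) (posf_inj E h.symm)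
  -- the position-count function
  have hex : ∀ j : ℕ, ∃ d : ℕ, d = k ∨ posf E (x + d) < j := fun j => ⟨k, Or.inl rfl⟩
  set r : ℕ → ℕ := fun j => Nat.find (hex j) with hr
  have r_le : ∀ j, r j ≤ k := fun j => Nat.find_le (Or.inl rfl)
  have r_spec : ∀ j, r j = k ∨ posf E (x + r j) < j := fun j => Nat.find_spec (hex j)
  have r_min : ∀ j, ∀ d : ℕ, d < r j → d ≠ k ∧ j ≤ posf E (x + d) := by
    intro j d hd
    have := Nat.find_min (hex j) hd
    push_neg at this
    exact ⟨this.1, this.2⟩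
  -- r 0 = k
  have r_zero : r 0 = k := by
    rw [hr]
    rw [Nat.find_eq_iff]
    refine ⟨Or.inl rfl, fun d hd => ?_⟩
    push_neg
    exact ⟨by omega, by omega⟩
  -- r n = 0
  have r_n : r n = 0 := by
    rw [hr, Nat.find_eq_iff]
    refine ⟨Or.inr ?_, fun d hd => by omega⟩
    simpa using posf_lt E x
  -- main trajectory induction
  have main : ∀ i : ℕ, i ≤ n → sfx t (n - i) x = x + (r (n - i) : ℤ) := by
    intro i
    induction i with
    | zero =>
        intro _
        simp only [Nat.sub_zero, sfx_n, r_n]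
        simp
    | succ i ih =>
        intro hi
        have hj : n - (i + 1) < n := by omega
        set j := n - (i + 1) with hjdef
        have hsucc : n - i = j + 1 := by omega
        have ihj : sfx t (j + 1) x = x + (r (j + 1) : ℤ) := by
          rw [← hsucc]; exact ih (by omega)
        set r' := r (j + 1) with hr'
        set y : ℤ := x + (r' : ℤ) with hy
        have hstep : sfx t j x = t ⟨j, hj⟩ (sfx t (j + 1) x) := by
          rw [sfx_step t hj]; rfl
        rw [hstep, ihj]
        have hEj : cls n (ℓ ⟨j, hj⟩) = E ⟨j, hj⟩ := hE _
        by_cases hA : cls n y = E ⟨j, hj⟩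
        -- case A : token moves right
        · have hposy : posf E y = j := (posf_eq_iff E y ⟨j, hj⟩).mpr hA
          have hr'k : r' < k := by
            have hle := r_le (j + 1)
            rw [← hr'] at hle
            rcases lt_or_eq_of_le hle with h | h
            · exact h
            · exfalso
              have hd : k - 1 < r' := by omega
              have := (r_min (j + 1) (k - 1) hd).2
              have hcast : x + ((k - 1 : ℕ) : ℤ) = x + k - 1 := by
                push_cast [Nat.cast_sub (by omega : 1 ≤ k)]; ring
              rw [hcast] at this
              have h3 : posf E (x + (k:ℤ) - 1) ≥ j + 1 := this
              have h2 : posf E (x + (k:ℤ)) = posf E y := by rw [hy, h]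
              omega
          -- evaluate the transposition
          have hdvd : (n:ℤ) ∣ y - ℓ ⟨j, hj⟩ := cls_eq_iff.mp (by rw [hA, hEj])
          have heval : t ⟨j, hj⟩ y = y + 1 := by
            rw [(hIT ⟨j, hj⟩).apply_a hdvd]; ring
          rw [heval]
          -- r j = r' + 1
          have hrj : r j = r' + 1 := by
            rw [hr, Nat.find_eq_iff]
            constructor
            · rcases Nat.lt_or_ge (r' + 1) k with h | h
              · refine Or.inr ?_
                have hc := chain (r' + 1) (by omega) h
                have hcast : x + ((r' + 1 : ℕ) : ℤ) - 1 = y := by push_cast [hy]; ring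
                rw [hcast] at hc
                omega
              · exact Or.inl (by omega)
            · intro d hd
              push_neg
              rcases Nat.lt_or_ge d r' with h | h
              · have := r_min (j + 1) d (by omega)
                exact ⟨this.1, by omega⟩
              · have hdr : d = r' := by omega
                subst hdr
                refine ⟨by omega, ?_⟩
                rw [← hy, hposy]
          rw [hrj, hy]; push_cast; ring
        · by_cases hB : cls n (y - 1) = E ⟨j, hj⟩
          -- case B : impossible
          · exfalso
            have hposy : posf E (y - 1) = j := (posf_eq_iff E (y - 1) ⟨j, hj⟩).mpr hB
            rcases Nat.eq_zero_or_pos r' with h0 | hpos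
            · -- r' = 0 : contradiction with x ∈ Rset
              have hyx : y = x := by rw [hy, h0]; simp
              have hspec := r_spec (j + 1)
              rw [← hr'] at hspec
              rcases hspec with h | h
              · omega
              · rw [h0] at h
                simp only [Nat.cast_zero, add_zero] at h
                rw [hyx] at hposy
                omega
            · have hd : r' - 1 < r' := by omega
              have := (r_min (j + 1) (r' - 1) (by omega)).2
              have hcast : x + ((r' - 1 : ℕ) : ℤ) = y - 1 := by
                push_cast [Nat.cast_sub (by omega : 1 ≤ r'), hy]; ring
              rw [hcast, hposy] at this
              omega
          -- case C : token fixed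
          · have hfix : t ⟨j, hj⟩ y = y := by
              apply (hIT ⟨j, hj⟩).apply_fix
              · intro hc
                exact hA ((cls_eq_iff.mpr hc).trans hEj)
              · intro hc
                apply hB
                have : (n:ℤ) ∣ (y - 1) - ℓ ⟨j, hj⟩ := by
                  obtain ⟨m, hm⟩ := hc
                  exact ⟨m, by linear_combination hm⟩
                exact (cls_eq_iff.mpr this).trans hEj
            rw [hfix]
            have hrj : r j = r' := by
              rw [hr, Nat.find_eq_iff]
              constructor
              · have hspec := r_spec (j + 1)
                rw [← hr'] at hspec
                rcases hspec with h | h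
                · exact Or.inl h
                · refine Or.inr ?_
                  rw [← hy] at h ⊢
                  have hne : posf E y ≠ j := by
                    intro hc
                    exact hA ((posf_eq_iff E y ⟨j, hj⟩).mp hc)
                  omega
              · intro d hd
                push_neg
                have := r_min (j + 1) d (by omega)
                exact ⟨this.1, by omega⟩
            rw [hrj]
  have := main n (le_refl n)
  rw [Nat.sub_self] at this
  rw [← sfx_zero t, this, r_zero]

end S4
section S5

variable {n : ℕ}

theorem walk_step [NeZero n] (hn2 : 2 ≤ n) {t : Fin n → Equiv.Perm ℤ} (ℓ : Fin n → ℤ)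
    (hIT : ∀ j, IsTransposition n (ℓ j) (ℓ j + 1) (t j))
    (E : Fin n ≃ ZMod n) (hE : ∀ j, cls n (ℓ j) = E j)
    (x : ℤ) (hx : cls n x ∈ Rset E) :
    ∃ k : ℕ, 0 < k ∧ wprod t x = x + k ∧ cls n (x + k) ∈ Rset E ∧
      ∀ d : ℕ, 0 < d → d < k → cls n (x + d) ∉ Rset E := by
  classical
  have hex : ∃ d : ℕ, 0 < d ∧ cls n (x + d) ∈ Rset E := by
    refine ⟨n, Nat.pos_of_ne_zero (NeZero.ne n), ?_⟩
    have : cls n (x + (n:ℕ)) = cls n x := cls_eq_iff.mpr ⟨1, by push_cast; ring⟩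
    rw [this]; exact hx
  obtain ⟨hkpos, hkmem⟩ := Nat.find_spec hex
  set k := Nat.find hex with hk
  have hmin : ∀ d : ℕ, 0 < d → d < k → cls n (x + d) ∉ Rset E := by
    intro d hd hdk hmem
    exact Nat.find_min hex hdk ⟨hd, hmem⟩
  exact ⟨k, hkpos, walk_eval hn2 ℓ hIT E hE x hx k hkpos hmin hkmem, hkmem, hmin⟩

theorem walk_reach [NeZero n] (hn2 : 2 ≤ n) {t : Fin n → Equiv.Perm ℤ} (ℓ : Fin n → ℤ)
    (hIT : ∀ j, IsTransposition n (ℓ j) (ℓ j + 1) (t j))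
    (E : Fin n ≃ ZMod n) (hE : ∀ j, cls n (ℓ j) = E j)
    (S : Set (ZMod n)) (hS : ∀ x : ℤ, cls n x ∈ S → cls n (wprod t x) ∈ S)
    (hSR : ∀ v ∈ S, v ∈ Rset E) :
    ∀ D : ℕ, ∀ x : ℤ, cls n x ∈ S → cls n (x + D) ∈ Rset E → cls n (x + D) ∈ S := by
  intro D
  induction D using Nat.strong_induction_on with
  | _ D ih =>
    intro x hxS hDR
    rcases Nat.eq_zero_or_pos D with rfl | hD
    · simpa using hxS
    · obtain ⟨k, hk, heval, hkR, hmin⟩ := walk_step hn2 ℓ hIT E hE x (hSR _ hxS)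
      have hkD : k ≤ D := by
        by_contra h
        push_neg at h
        exact (hmin D hD h) hDR
      have hxkS : cls n (x + k) ∈ S := by
        have := hS x hxS
        rw [heval] at this
        exact this
      have hcast : (x + (k:ℤ)) + ((D - k : ℕ) : ℤ) = x + (D:ℤ) := by
        push_cast [Nat.cast_sub hkD]; ring
      rcases Nat.eq_zero_or_pos (D - k) with hdk | hdk
      · have hDk : D = k := by omega
        rw [hDk]; exact hxkS
      · have hfin : cls n ((x + (k:ℤ)) + ((D - k : ℕ) : ℤ)) ∈ Rset E := by
          rw [hcast]; exact hDR
        have := ih (D - k) (by omega) (x + k) hxkS hfin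
        rw [hcast] at this
        exact this

theorem walk_trans [NeZero n] (hn2 : 2 ≤ n) {t : Fin n → Equiv.Perm ℤ} (ℓ : Fin n → ℤ)
    (hIT : ∀ j, IsTransposition n (ℓ j) (ℓ j + 1) (t j))
    (E : Fin n ≃ ZMod n) (hE : ∀ j, cls n (ℓ j) = E j)
    (S : Set (ZMod n)) (hS : ∀ x : ℤ, cls n x ∈ S → cls n (wprod t x) ∈ S)
    (hSR : ∀ v ∈ S, v ∈ Rset E) (hne : S.Nonempty) :
    ∀ v ∈ Rset E, v ∈ S := by
  obtain ⟨v0, hv0⟩ := hne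
  obtain ⟨x0, hx0icc, hx0⟩ := exists_icc_rep v0
  intro w hw
  set d : ℕ := (w - v0).val with hd
  have hcast : cls n (x0 + (d:ℕ)) = w := by
    rw [cls_add_nat, hx0, hd, ZMod.natCast_val, ZMod.cast_id]
    ring
  have hx0S : cls n x0 ∈ S := by rw [hx0]; exact hv0
  have := walk_reach hn2 ℓ hIT E hE S hS hSR d x0 hx0S (by rw [hcast]; exact hw)
  rw [hcast] at this
  exact this

lemma Rset_nonempty [NeZero n] (hn2 : 2 ≤ n) (E : Fin n ≃ ZMod n) :
    ∃ v, v ∈ Rset E := by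
  obtain ⟨x, _, hx⟩ := exists_icc_rep (E ⟨n-1, by omega⟩)
  refine ⟨cls n x, ?_⟩
  show ((E.symm (cls n x - 1) : Fin n) : ℕ) < ((E.symm (cls n x) : Fin n) : ℕ)
  have h1 : E.symm (cls n x) = ⟨n-1, by omega⟩ := by rw [hx, Equiv.symm_apply_apply]
  have h2 : ((E.symm (cls n x - 1) : Fin n) : ℕ) < n := Fin.is_lt _
  have h3 : E.symm (cls n x - 1) ≠ E.symm (cls n x) := by
    intro hc
    apply cls_pred_ne hn2 x
    have h4 := E.symm.injective hc
    rw [← cls_sub_one] at h4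
    exact h4
  have h5 : ((E.symm (cls n x - 1) : Fin n) : ℕ) ≠ n - 1 := by
    intro hc
    exact h3 (by rw [h1]; exact Fin.ext (by rw [hc])) 
  rw [h1]
  simp only []
  omega

lemma mem_Rset_rev_iff [NeZero n] (hn2 : 2 ≤ n) (E : Fin n ≃ ZMod n) (y : ℤ) :
    cls n y ∈ Rset (Fin.revPerm.trans E) ↔ cls n y ∉ Rset E := by
  rw [mem_Rset_iff, mem_Rset_iff]
  have hne : posf E (y - 1) ≠ posf E y := fun hc => cls_pred_ne hn2 y (posf_inj E hc)
  have h1 : ∀ z : ℤ, posf (Fin.revPerm.trans E) z = ((Fin.rev (E.symm (cls n z)) : Fin n) : ℕ) := by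
    intro z; rfl
  rw [h1, h1]
  constructor
  · intro h
    have := Fin.rev_lt_rev.mp h
    unfold posf at *
    omega
  · intro h
    apply Fin.rev_lt_rev.mpr
    unfold posf at *
    have : (E.symm (cls n y) : ℕ) < (E.symm (cls n (y-1)) : ℕ) ∨
        (E.symm (cls n (y-1)) : ℕ) = (E.symm (cls n y) : ℕ) := by omega
    rcases this with h2 | h2
    · exact h2
    · exact absurd h2 hne

lemma ofFn_reverse {α : Type*} (f : Fin n → α) :
    (List.ofFn f).reverse = List.ofFn (fun j => f j.rev) := by
  apply List.ext_getElem
  · simp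
  · intro i h1 h2
    simp only [List.getElem_reverse, List.getElem_ofFn]
    congr 1
    apply Fin.ext
    simp only [List.length_reverse, List.length_ofFn] at h1 h2 ⊢
    simp [Fin.rev]
    omega

lemma wprod_inv {t : Fin n → Equiv.Perm ℤ} (hinv : ∀ j, (t j)⁻¹ = t j) :
    (wprod t)⁻¹ = wprod (fun j => t j.rev) := by
  unfold wprod
  rw [List.prod_inv_reverse, List.map_ofFn, ofFn_reverse]
  have : (fun j : Fin n => ((fun x : Equiv.Perm ℤ => x⁻¹) ∘ t) j.rev) = fun j => t j.rev := by
    funext j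
    simp only [Function.comp_apply]
    exact hinv _
  rw [this]

/-- Fin n ≃ ZMod n -/
def finZMod (n : ℕ) [NeZero n] : Fin n ≃ ZMod n where
  toFun i := ((i : ℕ) : ZMod n)
  invFun v := ⟨v.val, ZMod.val_lt v⟩
  left_inv i := Fin.ext (ZMod.val_natCast_of_lt i.isLt)
  right_inv v := by simp [ZMod.natCast_val, ZMod.cast_id]

lemma sigS_Rset_pos [NeZero n] (hn2 : 2 ≤ n) {t : Fin n → Equiv.Perm ℤ} (ℓ : Fin n → ℤ)
    (hIT : ∀ j, IsTransposition n (ℓ j) (ℓ j + 1) (t j))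
    (E : Fin n ≃ ZMod n) (hE : ∀ j, cls n (ℓ j) = E j) :
    0 < sigS n (Rset E) (wprod t) := by
  classical
  rw [sigS_eq_filter]
  apply Finset.sum_pos
  · intro x hx
    obtain ⟨hicc, hmem⟩ := Finset.mem_filter.mp hx
    obtain ⟨k, hk, heval, _, _⟩ := walk_step hn2 ℓ hIT E hE x hmem
    rw [heval]
    omega
  · obtain ⟨v, hv⟩ := Rset_nonempty hn2 E
    obtain ⟨x, hxicc, hx⟩ := exists_icc_rep v
    exact ⟨x, Finset.mem_filter.mpr ⟨hxicc, by rw [hx]; exact hv⟩⟩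

end S5
section S6

variable {n : ℕ}

lemma piP_inv [NeZero n] {w : Equiv.Perm ℤ} (hw : IsPeriodic n w) :
    piP hw.inv = (piP hw)⁻¹ := by
  apply Equiv.ext
  intro v
  rfl

lemma listProd_preserves {S : Set (ZMod n)} (L : List (Equiv.Perm ℤ))
    (h : ∀ r ∈ L, ∃ a b : ℤ, IsTransposition n a b r ∧ (cls n a ∈ S ↔ cls n b ∈ S)) :
    ∀ x : ℤ, cls n x ∈ S → cls n (L.prod x) ∈ S := by
  induction L with
  | nil => intro x hx; simpa using hx
  | cons r tl ih =>
      intro x hx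
      obtain ⟨a, b, hit, hiff⟩ := h r (by simp)
      have h2 := ih (fun r' hr' => h r' (by simp [hr'])) x hx
      have h3 : (r :: tl).prod x = r (tl.prod x) := by
        rw [List.prod_cons]; rfl
      rw [h3]
      exact hit.preserves hiff _ h2

lemma sigS_listProd_zero [NeZero n] {S : Set (ZMod n)} (L : List (Equiv.Perm ℤ))
    (h : ∀ r ∈ L, ∃ a b : ℤ, ¬ (n:ℤ) ∣ (a - b) ∧ IsTransposition n a b r ∧
      (cls n a ∈ S ↔ cls n b ∈ S)) :
    sigS n S L.prod = 0 := by
  classical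
  induction L with
  | nil =>
      rw [List.prod_nil, sigS_eq_filter]
      exact Finset.sum_eq_zero fun x _ => by simp
  | cons r tl ih =>
      obtain ⟨a, b, hab, hit, hiff⟩ := h r (by simp)
      have htl : ∀ r' ∈ tl, ∃ a b : ℤ, ¬ (n:ℤ) ∣ (a - b) ∧ IsTransposition n a b r' ∧
          (cls n a ∈ S ↔ cls n b ∈ S) := fun r' hr' => h r' (by simp [hr'])
      have htlper : IsPeriodic n tl.prod := by
        apply listProd_periodic
        intro r' hr'
        obtain ⟨a', b', _, hit', _⟩ := htl r' hr'
        exact hit'.periodic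
      have htlpres : ∀ x : ℤ, cls n x ∈ S → cls n (tl.prod x) ∈ S := by
        apply listProd_preserves
        intro r' hr'
        obtain ⟨a', b', _, hit', hiff'⟩ := htl r' hr'
        exact ⟨a', b', hit', hiff'⟩
      rw [List.prod_cons, sigS_mul hit.periodic htlper htlpres]
      rw [sigS_refl_zero hit hab hiff, ih htl]
      norm_num

theorem reflLength_c_ge (hn : 3 ≤ n) (c : Equiv.Perm ℤ) (s : Fin n → Equiv.Perm ℤ)
    (hs : ∀ i : Fin n, IsTransposition n ((i : ℤ) + 1) ((i : ℤ) + 2) (s i))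
    (e : Equiv.Perm (Fin n)) (hc : c = (List.ofFn (fun j => s (e j))).prod)
    {m : ℕ} (hm : RExpr n c m) : n ≤ m := by
  classical
  haveI : NeZero n := ⟨by omega⟩
  have hn2 : 2 ≤ n := by omega
  by_contra hcon
  push_neg at hcon
  -- word data
  set t1 : Fin n → Equiv.Perm ℤ := fun j => s (e j) with ht1
  have hIT1 : ∀ j : Fin n, IsTransposition n (((e j : ℤ)) + 1) (((e j : ℤ) + 1) + 1) (t1 j) := by
    intro j
    have h1 := hs (e j)
    have h2 : ((e j : ℤ)) + 2 = (((e j : ℤ)) + 1) + 1 := by ring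
    rw [h2] at h1
    exact h1
  set ℓ1 : Fin n → ℤ := fun j => ((e j : ℤ)) + 1 with hℓ1
  have hIT1' : ∀ j : Fin n, IsTransposition n (ℓ1 j) (ℓ1 j + 1) (t1 j) := hIT1
  set E1 : Fin n ≃ ZMod n := e.trans ((finZMod n).trans (Equiv.addRight (1 : ZMod n))) with hE1def
  have hE1 : ∀ j : Fin n, cls n (ℓ1 j) = E1 j := by
    intro j
    show ((((e j : ℤ)) + 1 : ℤ) : ZMod n) = (((e j : ℕ) : ZMod n) + 1)
    push_cast
    rfl
  have hrefl1 : ∀ j : Fin n, IsReflection n (t1 j) := by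
    intro j
    refine ⟨ℓ1 j, ℓ1 j + 1, ?_, hIT1' j⟩
    intro hdvd
    have h2 : (n:ℤ) ∣ 1 := by
      have h3 : ℓ1 j - (ℓ1 j + 1) = -1 := by ring
      rw [h3] at hdvd
      exact (dvd_neg.mp hdvd)
    exact not_dvd_one' hn2 h2
  have hcw : c = wprod t1 := hc
  have hcper : IsPeriodic n c := by
    rw [hcw]
    exact wprod_periodic t1 (fun j => (hIT1' j).periodic)
  -- reversed word data
  set t2 : Fin n → Equiv.Perm ℤ := fun j => t1 j.rev with ht2
  set ℓ2 : Fin n → ℤ := fun j => ℓ1 j.rev with hℓ2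
  have hIT2 : ∀ j : Fin n, IsTransposition n (ℓ2 j) (ℓ2 j + 1) (t2 j) := fun j => hIT1' j.rev
  set E2 : Fin n ≃ ZMod n := Fin.revPerm.trans E1 with hE2def
  have hE2 : ∀ j : Fin n, cls n (ℓ2 j) = E2 j := fun j => hE1 j.rev
  have hcinv : c⁻¹ = wprod t2 := by
    rw [hcw]
    exact wprod_inv (fun j => (hIT1' j).inv_eq)
  -- the expression
  obtain ⟨L, hlen, hrefl, hprod⟩ := hm
  have hLper : IsPeriodic n L.prod := listProd_periodic L fun r hr => (hrefl r hr).periodic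
  -- parity
  have hsign1 : Equiv.Perm.sign (piP hcper) = (-1 : ℤˣ) ^ m := by
    rw [piP_congr hcper hLper hprod.symm, sign_listProd_refl L hrefl hLper, hlen]
  have hsign2 : Equiv.Perm.sign (piP hcper) = (-1 : ℤˣ) ^ n := by
    have hreflN : ∀ r ∈ List.ofFn t1, IsReflection n r := by
      intro r hr
      obtain ⟨j, rfl⟩ := List.mem_ofFn.mp hr
      exact hrefl1 j
    have hNper : IsPeriodic n (List.ofFn t1).prod := wprod_periodic t1 fun j => (hIT1' j).periodic
    rw [piP_congr hcper hNper hcw, sign_listProd_refl _ hreflN hNper, List.length_ofFn]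
  have hpow : (-1 : ℤˣ) ^ m = (-1 : ℤˣ) ^ n := by rw [← hsign1, hsign2]
  have heven : Even (m + n) := by
    by_contra hodd
    have hodd2 : Odd (m + n) := Nat.not_even_iff_odd.mp hodd
    have h4 : (-1 : ℤˣ) ^ (m + n) = -1 := hodd2.neg_one_pow
    have h5 : (-1 : ℤˣ) ^ (m + n) = 1 := by
      rw [pow_add, hpow, ← pow_add]
      exact Even.neg_one_pow ⟨n, by ring⟩
    rw [h4] at h5
    exact absurd h5 (by decide)
  have hm2 : m ≤ n - 2 := by
    obtain ⟨q, hq⟩ := heven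
    omega
  -- coloring
  obtain ⟨f, hfcompat, hfcard⟩ := exists_coloring L hrefl
  have hcard2 : 1 < (Finset.image f Finset.univ).card := by omega
  obtain ⟨a0, ha0, b0, hb0, hab0⟩ := Finset.one_lt_card.mp hcard2
  obtain ⟨v1, _, hv1⟩ := Finset.mem_image.mp ha0
  obtain ⟨v2, _, hv2⟩ := Finset.mem_image.mp hb0
  set S : Set (ZMod n) := {v | f v = f v1} with hSdef
  have hv1S : v1 ∈ S := rfl
  have hv2S : v2 ∉ S := by
    intro hcc
    apply hab0
    rw [← hv1, ← hv2]
    exact (hcc).symm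
  have hedge : ∀ r ∈ L, ∃ a b : ℤ, ¬ (n:ℤ) ∣ (a - b) ∧ IsTransposition n a b r ∧
      (cls n a ∈ S ↔ cls n b ∈ S) := by
    intro r hr
    obtain ⟨a, b, hab, hit, heq⟩ := hfcompat r hr
    refine ⟨a, b, hab, hit, ?_⟩
    rw [hSdef]
    simp only [Set.mem_setOf_eq]
    rw [heq]
  have hSpres : ∀ x : ℤ, cls n x ∈ S → cls n (c x) ∈ S := by
    rw [← hprod]
    apply listProd_preserves
    intro r hr
    obtain ⟨a, b, _, hit, hiff⟩ := hedge r hr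
    exact ⟨a, b, hit, hiff⟩
  have hSsig : sigS n S c = 0 := by
    rw [← hprod]
    exact sigS_listProd_zero L hedge
  -- inverse invariance
  have hSpresInv : ∀ x : ℤ, cls n x ∈ S → cls n (c⁻¹ x) ∈ S := by
    set T : Finset (ZMod n) := Finset.univ.filter (· ∈ S) with hT
    have hmemT : ∀ v : ZMod n, v ∈ T ↔ v ∈ S := by
      intro v; rw [hT, Finset.mem_filter]; simp
    have hmapsto : ∀ v ∈ T, piP hcper v ∈ T := by
      intro v hv
      obtain ⟨x, _, hx⟩ := exists_icc_rep v
      rw [← hx, piP_cls, hmemT]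
      exact hSpres x (by rw [hx]; exact (hmemT v).mp hv)
    have himg : T.image (piP hcper) = T := by
      apply Finset.eq_of_subset_of_card_le
      · intro v hv
        obtain ⟨u, hu, rfl⟩ := Finset.mem_image.mp hv
        exact hmapsto u hu
      · rw [Finset.card_image_of_injective T (piP hcper).injective]
    intro x hx
    have hxT : cls n x ∈ T := (hmemT _).mpr hx
    rw [← himg] at hxT
    obtain ⟨u, huT, hu⟩ := Finset.mem_image.mp hxT
    have h2 : piP hcper.inv (cls n x) = cls n (c⁻¹ x) := piP_cls hcper.inv x
    rw [piP_inv hcper, ← hu] at h2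
    simp only [Equiv.Perm.inv_apply_self] at h2
    rw [← h2]
    exact (hmemT u).mp huT
  -- case analysis
  have hRL : ∀ y : ℤ, cls n y ∈ Rset E2 ↔ cls n y ∉ Rset E1 := fun y => mem_Rset_rev_iff hn2 E1 y
  by_cases hSR : ∃ v, v ∈ S ∧ v ∈ Rset E1
  · by_cases hSL : ∃ v, v ∈ S ∧ v ∈ Rset E2
    · -- both: S = univ, contradiction with v2 ∉ S
      have hRsub : ∀ v ∈ Rset E1, v ∈ S := by
        have := walk_trans hn2 ℓ1 hIT1' E1 hE1 {v | v ∈ S ∧ v ∈ Rset E1} ?_ ?_ ?_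
        · intro v hv; exact (this v hv).1
        · intro x hx
          constructor
          · rw [← hcw]
            exact hSpres x hx.1
          · obtain ⟨k, hk, heval, hkR, _⟩ := walk_step hn2 ℓ1 hIT1' E1 hE1 x hx.2
            rw [heval]
            exact hkR
        · intro v hv; exact hv.2
        · exact hSR
      have hLsub : ∀ v ∈ Rset E2, v ∈ S := by
        have := walk_trans hn2 ℓ2 hIT2 E2 hE2 {v | v ∈ S ∧ v ∈ Rset E2} ?_ ?_ ?_
        · intro v hv; exact (this v hv).1
        · intro x hx
          constructor
          · rw [← hcinv]
            exact hSpresInv x hx.1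
          · obtain ⟨k, hk, heval, hkR, _⟩ := walk_step hn2 ℓ2 hIT2 E2 hE2 x hx.2
            rw [heval]
            exact hkR
        · intro v hv; exact hv.2
        · exact hSL
      apply hv2S
      obtain ⟨x2, _, hx2⟩ := exists_icc_rep v2
      by_cases hcase : cls n x2 ∈ Rset E1
      · rw [← hx2]; exact hRsub _ hcase
      · rw [← hx2]; exact hLsub _ ((hRL x2).mpr hcase)
    · -- S ⊆ R : sigS > 0
      push_neg at hSL
      have hSsubR : ∀ v ∈ S, v ∈ Rset E1 := by
        intro v hv
        obtain ⟨x, _, hx⟩ := exists_icc_rep v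
        by_contra hnc
        apply hSL v hv
        rw [← hx] at hnc ⊢
        exact (hRL x).mpr hnc
      have hpos : 0 < sigS n S c := by
        rw [sigS_eq_filter]
        apply Finset.sum_pos
        · intro x hx
          simp only [Finset.mem_filter] at hx
          obtain ⟨hicc, hmem⟩ := hx
          obtain ⟨k, hk, heval, _, _⟩ := walk_step hn2 ℓ1 hIT1' E1 hE1 x (hSsubR _ hmem)
          rw [hcw, heval]
          omega
        · obtain ⟨x1, hx1icc, hx1⟩ := exists_icc_rep v1
          refine ⟨x1, ?_⟩
          simp only [Finset.mem_filter]
          exact ⟨hx1icc, by rw [hx1]; exact hv1S⟩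
      omega
  · -- S ⊆ L : sigS < 0
    push_neg at hSR
    have hSsubL : ∀ v ∈ S, v ∈ Rset E2 := by
      intro v hv
      obtain ⟨x, _, hx⟩ := exists_icc_rep v
      rw [← hx]
      exact (hRL x).mpr (by rw [hx]; exact hSR v hv)
    have hterm : ∀ x : ℤ, cls n x ∈ S → 0 < x - c x := by
      intro x hmem
      have hcxS : cls n (c x) ∈ S := hSpres x hmem
      obtain ⟨k, hk, heval, _, _⟩ := walk_step hn2 ℓ2 hIT2 E2 hE2 (c x) (hSsubL _ hcxS)
      rw [← hcinv] at heval
      rw [Equiv.Perm.inv_apply_self] at heval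
      omega
    have hneg2 : sigS n S c < 0 := by
      rw [sigS_eq_filter]
      have hpos : 0 < ∑ x ∈ (Finset.Icc (1:ℤ) (n:ℤ)).filter (fun x => cls n x ∈ S), (x - c x) := by
        apply Finset.sum_pos
        · intro x hx
          simp only [Finset.mem_filter] at hx
          exact hterm x hx.2
        · obtain ⟨x1, hx1icc, hx1⟩ := exists_icc_rep v1
          refine ⟨x1, ?_⟩
          simp only [Finset.mem_filter]
          exact ⟨hx1icc, by rw [hx1]; exact hv1S⟩
      have h7 : (∑ x ∈ (Finset.Icc (1:ℤ) (n:ℤ)).filter (fun x => cls n x ∈ S), (c x - x))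
          + (∑ x ∈ (Finset.Icc (1:ℤ) (n:ℤ)).filter (fun x => cls n x ∈ S), (x - c x)) = 0 := by
        rw [← Finset.sum_add_distrib]
        exact Finset.sum_eq_zero fun x _ => by ring
      linarith
    omega

end S6
section S7

variable {n : ℕ}

lemma not_dvd_two' (hn3 : 3 ≤ n) : ¬ (n:ℤ) ∣ 2 := by
  intro h
  have := Int.le_of_dvd (by norm_num) h
  omega

lemma cong_not_cong {x a c : ℤ} (h : (n:ℤ) ∣ x - a) (h2 : ¬ (n:ℤ) ∣ a - c) :
    ¬ (n:ℤ) ∣ x - c := by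
  intro hc
  apply h2
  have h3 := dvd_sub hc h
  have h4 : x - c - (x - a) = a - c := by ring
  rwa [h4] at h3

lemma dvd_window {t : ℤ} (hn0 : 0 < n) (h1 : -(n:ℤ) < t) (h2 : t < n) (h : (n:ℤ) ∣ t) :
    t = 0 := by
  obtain ⟨k, hk⟩ := h
  have hk1 : k < 1 := by
    by_contra hc; push_neg at hc
    have : (n:ℤ) * 1 ≤ n * k := by
      apply mul_le_mul_of_nonneg_left hc
      omega
    omega
  have hk2 : -1 < k := by
    by_contra hc; push_neg at hc
    have : (n:ℤ) * k ≤ n * (-1) := by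
      apply mul_le_mul_of_nonneg_left hc
      omega
    omega
  have : k = 0 := by omega
  rw [this, mul_zero] at hk
  omega

lemma not_dvd_one_sub {a : ℤ} (hn2 : 2 ≤ n) : ¬ (n:ℤ) ∣ a - (a + 1) := by
  intro h
  rw [show a - (a+1) = -1 by ring, dvd_neg] at h
  exact not_dvd_one' hn2 h

lemma not_dvd_two_sub {a : ℤ} (hn3 : 3 ≤ n) : ¬ (n:ℤ) ∣ a - (a + 2) := by
  intro h
  rw [show a - (a+2) = -2 by ring, dvd_neg] at h
  exact not_dvd_two' hn3 h

lemma ne_one_of_apply {w : Equiv.Perm ℤ} {x : ℤ} (h : w x ≠ x) : w ≠ 1 :=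
  fun hc => h (by rw [hc]; rfl)

lemma IsTransposition.apply_base {a b : ℤ} {w : Equiv.Perm ℤ}
    (h : IsTransposition n a b w) : w a = b := by
  have := h.1 0
  simpa using this

lemma reflLength_one_of {w : Equiv.Perm ℤ} (hw : IsReflection n w) (hne : w ≠ 1) :
    reflLength n w = 1 := by
  have h1 : RExpr n w 1 := ⟨[w], rfl, by simpa using hw, by simp⟩
  have hle : reflLength n w ≤ 1 := h1.reflLength_le
  rcases Nat.lt_or_ge (reflLength n w) 1 with h | h
  · exfalso
    have h0 : reflLength n w = 0 := by omega
    rcases Nat.sInf_eq_zero.mp h0 with hmem | hemp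
    · exact hne (RExpr.eq_one hmem)
    · obtain ⟨L, hl1, hl2, hl3⟩ := h1
      exact absurd hemp (Set.nonempty_iff_ne_empty.mp ⟨1, L, hl1, hl2, hl3⟩)
  · omega

lemma reflLength_two_of {u : Equiv.Perm ℤ} (hu : RExpr n u 2) {z1 z2 z3 : ℤ}
    (h12 : ¬ (n:ℤ) ∣ z1 - z2) (h13 : ¬ (n:ℤ) ∣ z1 - z3) (h23 : ¬ (n:ℤ) ∣ z2 - z3)
    (m1 : u z1 ≠ z1) (m2 : u z2 ≠ z2) (m3 : u z3 ≠ z3) :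
    reflLength n u = 2 := by
  have hle : reflLength n u ≤ 2 := hu.reflLength_le
  have hne1 : u ≠ 1 := ne_one_of_apply m1
  have hmin := hu.min
  rcases Nat.lt_or_ge (reflLength n u) 2 with h | h
  · exfalso
    interval_cases hr : (reflLength n u)
    · exact hne1 hmin.eq_one
    · obtain ⟨a, b, hab, hit⟩ := hmin.isReflection
      have hmove : ∀ z : ℤ, u z ≠ z → ((n:ℤ) ∣ z - a ∨ (n:ℤ) ∣ z - b) := by
        intro z hz
        by_contra hc
        push_neg at hc
        exact hz (hit.apply_fix hc.1 hc.2)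
      have hsub : ∀ z w : ℤ, (n:ℤ) ∣ z - a → (n:ℤ) ∣ w - a → (n:ℤ) ∣ z - w := by
        intro z w hza hwa
        have h3 := dvd_sub hza hwa
        have : z - a - (w - a) = z - w := by ring
        rwa [this] at h3
      have hsb : ∀ z w : ℤ, (n:ℤ) ∣ z - b → (n:ℤ) ∣ w - b → (n:ℤ) ∣ z - w := by
        intro z w hza hwa
        have h3 := dvd_sub hza hwa
        have : z - b - (w - b) = z - w := by ring
        rwa [this] at h3
      rcases hmove z1 m1 with ha1 | hb1 <;> rcases hmove z2 m2 with ha2 | hb2 <;>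
        rcases hmove z3 m3 with ha3 | hb3
      · exact h12 (hsub _ _ ha1 ha2)
      · exact h12 (hsub _ _ ha1 ha2)
      · exact h13 (hsub _ _ ha1 ha3)
      · exact h23 (hsb _ _ hb2 hb3)
      · exact h23 (hsub _ _ ha2 ha3)
      · exact h13 (hsb _ _ hb1 hb3)
      · exact h12 (hsb _ _ hb1 hb2)
      · exact h12 (hsb _ _ hb1 hb2)
  · omega

section Braid

variable (hn3 : 3 ≤ n) {a : ℤ} {w1 w2 : Equiv.Perm ℤ}
  (h1 : IsTransposition n a (a + 1) w1) (h2 : IsTransposition n (a + 1) (a + 2) w2)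

include hn3 h1 h2

lemma fix_w1_a2 (z : ℤ) (hz : (n:ℤ) ∣ z - (a + 2)) : w1 z = z := by
  have hn2 : 2 ≤ n := by omega
  apply h1.apply_fix
  · intro hc
    have h3 := dvd_sub hc hz
    have h4 : z - a - (z - (a + 2)) = 2 := by ring
    rw [h4] at h3
    exact not_dvd_two' hn3 h3
  · intro hc
    have h3 := dvd_sub hc hz
    have h4 : z - (a + 1) - (z - (a + 2)) = 1 := by ring
    rw [h4] at h3
    exact not_dvd_one' hn2 h3

lemma fix_w2_a (z : ℤ) (hz : (n:ℤ) ∣ z - a) : w2 z = z := by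
  have hn2 : 2 ≤ n := by omega
  apply h2.apply_fix
  · intro hc
    have h3 := dvd_sub hz hc
    have h4 : z - a - (z - (a + 1)) = 1 := by ring
    rw [h4] at h3
    exact not_dvd_one' hn2 h3
  · intro hc
    have h3 := dvd_sub hz hc
    have h4 : z - a - (z - (a + 2)) = 2 := by ring
    rw [h4] at h3
    exact not_dvd_two' hn3 h3

lemma braid_aux1 : IsTransposition n a (a + 2) (w1 * w2 * w1) := by
  refine ⟨fun k => ?_, fun k => ?_, fun x hxa hxb => ?_⟩
  · simp only [Equiv.Perm.mul_apply]
    rw [h1.1 k]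
    have hd : (n:ℤ) ∣ (a + 1 + k * n) - (a + 1) := ⟨k, by ring⟩
    rw [h2.apply_a hd]
    have hz : a + 2 + (a + 1 + k * (n:ℤ) - (a + 1)) = a + 2 + k * n := by ring
    rw [hz, fix_w1_a2 hn3 h1 h2 (a + 2 + k * (n:ℤ)) ⟨k, by ring⟩]
  · simp only [Equiv.Perm.mul_apply]
    rw [fix_w1_a2 hn3 h1 h2 (a + 2 + k * (n:ℤ)) ⟨k, by ring⟩]
    have hd : (n:ℤ) ∣ (a + 2 + k * n) - (a + 2) := ⟨k, by ring⟩
    rw [h2.apply_b hd]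
    have hz : a + 1 + (a + 2 + k * (n:ℤ) - (a + 2)) = a + 1 + k * n := by ring
    rw [hz, h1.2.1 k]
  · simp only [Equiv.Perm.mul_apply]
    by_cases hmid : (n:ℤ) ∣ x - (a + 1)
    · rw [h1.apply_b hmid]
      have hxa' : (n:ℤ) ∣ (a + (x - (a+1))) - a := by
        obtain ⟨k, hk⟩ := hmid
        exact ⟨k, by linear_combination hk⟩
      rw [fix_w2_a hn3 h1 h2 (a + (x - (a+1))) hxa', h1.apply_a hxa']
      ring
    · have hfix1 : w1 x = x := h1.apply_fix hxa hmid
      rw [hfix1, h2.apply_fix hmid hxb, hfix1]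

lemma braid_aux2 : IsTransposition n a (a + 2) (w2 * w1 * w2) := by
  refine ⟨fun k => ?_, fun k => ?_, fun x hxa hxb => ?_⟩
  · simp only [Equiv.Perm.mul_apply]
    rw [fix_w2_a hn3 h1 h2 (a + k * (n:ℤ)) ⟨k, by ring⟩, h1.1 k]
    have hd : (n:ℤ) ∣ (a + 1 + k * n) - (a + 1) := ⟨k, by ring⟩
    rw [h2.apply_a hd]
    ring
  · simp only [Equiv.Perm.mul_apply]
    have hd : (n:ℤ) ∣ (a + 2 + k * n) - (a + 2) := ⟨k, by ring⟩
    rw [h2.apply_b hd]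
    have hz : a + 1 + (a + 2 + k * (n:ℤ) - (a + 2)) = a + 1 + k * n := by ring
    rw [hz, h1.2.1 k, fix_w2_a hn3 h1 h2 (a + k * (n:ℤ)) ⟨k, by ring⟩]
  · simp only [Equiv.Perm.mul_apply]
    by_cases hmid : (n:ℤ) ∣ x - (a + 1)
    · rw [h2.apply_a hmid]
      have hx2 : (n:ℤ) ∣ (a + 2 + (x - (a+1))) - (a + 2) := by
        obtain ⟨k, hk⟩ := hmid
        exact ⟨k, by linear_combination hk⟩
      rw [fix_w1_a2 hn3 h1 h2 (a + 2 + (x - (a+1))) hx2, h2.apply_b hx2]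
      ring
    · have hfix2 : w2 x = x := h2.apply_fix hmid hxb
      rw [hfix2, h1.apply_fix hxa hmid, hfix2]

lemma braid_eq : w1 * w2 * w1 = w2 * w1 * w2 :=
  (braid_aux1 hn3 h1 h2).unique (braid_aux2 hn3 h1 h2)

end Braid

lemma IT_commute {a b : ℤ} {w1 w2 : Equiv.Perm ℤ}
    (h1 : IsTransposition n a (a + 1) w1) (h2 : IsTransposition n b (b + 1) w2)
    (q1 : ¬ (n:ℤ) ∣ a - b) (q2 : ¬ (n:ℤ) ∣ a - (b + 1)) (q3 : ¬ (n:ℤ) ∣ (a + 1) - b)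
    (q4 : ¬ (n:ℤ) ∣ (a + 1) - (b + 1)) :
    w1 * w2 = w2 * w1 := by
  have q1' : ¬ (n:ℤ) ∣ b - a := fun hc => q1 (dvd_sub_comm.mp hc)
  have q2' : ¬ (n:ℤ) ∣ (b + 1) - a := fun hc => q2 (dvd_sub_comm.mp hc)
  have q3' : ¬ (n:ℤ) ∣ b - (a + 1) := fun hc => q3 (dvd_sub_comm.mp hc)
  have q4' : ¬ (n:ℤ) ∣ (b + 1) - (a + 1) := fun hc => q4 (dvd_sub_comm.mp hc)
  have key : ∀ x : ℤ, w1 (w2 x) = w2 (w1 x) := by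
    intro x
    by_cases hxa : (n:ℤ) ∣ x - a
    · have f2 : w2 x = x := h2.apply_fix (cong_not_cong hxa q1) (cong_not_cong hxa q2)
      rw [f2, h1.apply_a hxa]
      have hz : (n:ℤ) ∣ (a + 1 + (x - a)) - (a + 1) := by
        obtain ⟨k, hk⟩ := hxa; exact ⟨k, by linear_combination hk⟩
      exact (h2.apply_fix (cong_not_cong hz q3) (cong_not_cong hz q4)).symm
    · by_cases hxa1 : (n:ℤ) ∣ x - (a + 1)
      · have f2 : w2 x = x := h2.apply_fix (cong_not_cong hxa1 q3) (cong_not_cong hxa1 q4)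
        rw [f2, h1.apply_b hxa1]
        have hz : (n:ℤ) ∣ (a + (x - (a+1))) - a := by
          obtain ⟨k, hk⟩ := hxa1; exact ⟨k, by linear_combination hk⟩
        exact (h2.apply_fix (cong_not_cong hz q1) (cong_not_cong hz q2)).symm
      · have f1 : w1 x = x := h1.apply_fix hxa hxa1
        rw [f1]
        by_cases hxb : (n:ℤ) ∣ x - b
        · have e2 : w2 x = b + 1 + (x - b) := h2.apply_a hxb
          rw [e2]
          have hz : (n:ℤ) ∣ (b + 1 + (x - b)) - (b + 1) := by
            obtain ⟨k, hk⟩ := hxb; exact ⟨k, by linear_combination hk⟩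
          exact h1.apply_fix (cong_not_cong hz q2') (cong_not_cong hz q4')
        · by_cases hxb1 : (n:ℤ) ∣ x - (b + 1)
          · have e2 : w2 x = b + (x - (b + 1)) := h2.apply_b hxb1
            rw [e2]
            have hz : (n:ℤ) ∣ (b + (x - (b+1))) - b := by
              obtain ⟨k, hk⟩ := hxb1; exact ⟨k, by linear_combination hk⟩
            exact h1.apply_fix (cong_not_cong hz q1') (cong_not_cong hz q3')
          · rw [h2.apply_fix hxb hxb1, f1]
  ext x
  simp only [Equiv.Perm.mul_apply]
  exact key x

end S7
section S8

variable {n : ℕ}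

lemma list_split {M : Type*} [Monoid M] (l : List M) (i : ℕ) (h : i < l.length) :
    l.prod = (l.take i).prod * l[i] * (l.drop (i+1)).prod := by
  conv_lhs => rw [← List.take_append_drop i l]
  rw [List.prod_append, List.drop_eq_getElem_cons h, List.prod_cons, ← mul_assoc]

lemma list_split2 {M : Type*} [Monoid M] (l : List M) (i j : ℕ) (hij : i < j)
    (hj : j < l.length) :
    l.prod = (l.take i).prod * l[i] * ((l.drop (i+1)).take (j - i - 1)).prod * l[j]
      * (l.drop (j+1)).prod := by
  have h1 := list_split l i (by omega)
  have hlen2 : j - i - 1 < (l.drop (i+1)).length := by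
    rw [List.length_drop]; omega
  have h2 := list_split (l.drop (i+1)) (j - i - 1) hlen2
  have h3 : (l.drop (i+1))[j - i - 1] = l[j] := by
    have := List.getElem_drop (xs := l) (i := i+1) (j := j - i - 1)
      (h := hlen2)
    rw [this]
    congr 1
    omega
  have h4 : (l.drop (i+1)).drop (j - i - 1 + 1) = l.drop (j+1) := by
    rw [List.drop_drop]
    congr 1
    omega
  rw [h1, h2, h3, h4]
  simp only [mul_assoc]

section Ctx

variable (hn : 3 ≤ n) {c : Equiv.Perm ℤ} {s : Fin n → Equiv.Perm ℤ}
  (hs : ∀ i : Fin n, IsTransposition n ((i : ℤ) + 1) ((i : ℤ) + 2) (s i))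
  {e : Equiv.Perm (Fin n)} (hc : c = (List.ofFn (fun j => s (e j))).prod)

include hn hs

lemma sIT (i : Fin n) : IsTransposition n ((i : ℤ) + 1) (((i : ℤ) + 1) + 1) (s i) := by
  have h1 := hs i
  have h2 : ((i : ℤ)) + 2 = (((i : ℤ)) + 1) + 1 := by ring
  rw [h2] at h1
  exact h1

lemma s_refl (i : Fin n) : IsReflection n (s i) :=
  ⟨(i : ℤ) + 1, ((i : ℤ) + 1) + 1, not_dvd_one_sub (by omega), sIT hn hs i⟩

lemma s_len (i : Fin n) : reflLength n (s i) = 1 := by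
  apply reflLength_one_of (s_refl hn hs i)
  apply ne_one_of_apply (x := (i : ℤ) + 1)
  rw [(sIT hn hs i).apply_base]
  omega

lemma s_rexpr (i : Fin n) : RExpr n (s i) 1 :=
  ⟨[s i], rfl, by simpa using s_refl hn hs i, by simp⟩

include hc

lemma word_rexpr : RExpr n c n := by
  refine ⟨List.ofFn (fun j => s (e j)), by simp, ?_, hc.symm⟩
  intro r hr
  obtain ⟨j, rfl⟩ := List.mem_ofFn.mp hr
  exact s_refl hn hs (e j)

lemma c_len_ge : n ≤ reflLength n c := by
  have h := (word_rexpr hn hs hc).min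
  exact reflLength_c_ge hn c s hs e hc h

lemma sandwich {X Y w : Equiv.Perm ℤ} {mX mY mw : ℕ}
    (hX : RExpr n X mX) (hY : RExpr n Y mY) (hw : RExpr n w mw)
    (hwlen : reflLength n w = mw) (hd : c = X * w * Y) (hsum : mX + mw + mY = n) :
    w ∈ PcW n c := by
  have hwper := hw.periodic
  have hconj : RExpr n (w⁻¹ * X * w) mX := hX.conj hwper
  have hwc : w⁻¹ * c = (w⁻¹ * X * w) * Y := by rw [hd]; group
  have h1 : RExpr n (w⁻¹ * c) (mX + mY) := by rw [hwc]; exact hconj.mul hY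
  have h2 := h1.reflLength_le
  have h3 : n ≤ reflLength n c := c_len_ge hn hs hc
  have h6 : RExpr n c (reflLength n w + reflLength n (w⁻¹ * c)) := by
    have h5 := hw.min.mul h1.min
    have hcc : w * (w⁻¹ * c) = c := by group
    rwa [hcc] at h5
  have h7 := h6.reflLength_le
  show reflLength n c = reflLength n w + reflLength n (w⁻¹ * c)
  omega

lemma take_rexpr (k : ℕ) (hk : k ≤ n) :
    RExpr n ((List.ofFn (fun j => s (e j))).take k).prod k := by
  refine ⟨_, ?_, ?_, rfl⟩
  · rw [List.length_take, List.length_ofFn]; omega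
  · intro r hr
    obtain ⟨j, rfl⟩ := List.mem_ofFn.mp (List.mem_of_mem_take hr)
    exact s_refl hn hs (e j)

lemma drop_rexpr (k : ℕ) :
    RExpr n ((List.ofFn (fun j => s (e j))).drop k).prod (n - k) := by
  refine ⟨_, ?_, ?_, rfl⟩
  · rw [List.length_drop, List.length_ofFn]
  · intro r hr
    obtain ⟨j, rfl⟩ := List.mem_ofFn.mp (List.mem_of_mem_drop hr)
    exact s_refl hn hs (e j)

lemma mid_rexpr (k m : ℕ) (hkm : k + m ≤ n) :
    RExpr n (((List.ofFn (fun j => s (e j))).drop k).take m).prod m := by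
  refine ⟨_, ?_, ?_, rfl⟩
  · rw [List.length_take, List.length_drop, List.length_ofFn]; omega
  · intro r hr
    obtain ⟨j, rfl⟩ := List.mem_ofFn.mp (List.mem_of_mem_drop (List.mem_of_mem_take hr))
    exact s_refl hn hs (e j)

lemma mem_s (i : Fin n) : s i ∈ PcW n c := by
  set l := List.ofFn (fun j => s (e j)) with hl
  set p : Fin n := e.symm i with hp
  have hpl : (p : ℕ) < l.length := by rw [hl, List.length_ofFn]; exact p.isLt
  have hgp : l[(p : ℕ)] = s i := by
    simp only [hl, List.getElem_ofFn, Fin.eta]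
    rw [hp, e.apply_symm_apply]
  have hsplit : c = (l.take p).prod * s i * (l.drop (p+1)).prod := by
    rw [hc, ← hgp]
    exact list_split l p hpl
  apply sandwich hn hs hc (take_rexpr hn hs hc p (by omega)) (drop_rexpr hn hs hc (p+1))
    (s_rexpr hn hs i) (s_len hn hs i) hsplit
  have := p.isLt
  omega

lemma pair_mem (p q : Fin n) (hpq : (p : ℕ) < q)
    (h2 : reflLength n (s (e p) * s (e q)) = 2) : s (e p) * s (e q) ∈ PcW n c := by
  set l := List.ofFn (fun j => s (e j)) with hl
  have hql : (q : ℕ) < l.length := by rw [hl, List.length_ofFn]; exact q.isLt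
  have hgp : l[(p : ℕ)]'(by omega) = s (e p) := by
    simp only [hl, List.getElem_ofFn, Fin.eta]
  have hgq : l[(q : ℕ)] = s (e q) := by
    simp only [hl, List.getElem_ofFn, Fin.eta]
  have hsplit := list_split2 l p q hpq hql
  rw [hgp, hgq] at hsplit
  set A := (l.take (p:ℕ)).prod with hA
  set B := ((l.drop ((p:ℕ)+1)).take ((q:ℕ) - p - 1)).prod with hB
  set C := (l.drop ((q:ℕ)+1)).prod with hC
  have hsp : s (e p) * s (e p) = 1 := (hs (e p)).mul_self
  have hkey : ∀ X : Equiv.Perm ℤ, s (e p) * (s (e p) * X) = X := fun X => by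
    rw [← mul_assoc, hsp, one_mul]
  have hd : c = (A * (s (e p) * B * s (e p))) * (s (e p) * s (e q)) * C := by
    rw [hc, hsplit]
    simp only [mul_assoc, hkey]
  have hXc : RExpr n (s (e p) * B * s (e p)) ((q:ℕ) - p - 1) := by
    have hBe : RExpr n B ((q:ℕ) - p - 1) := mid_rexpr hn hs hc ((p:ℕ)+1) ((q:ℕ) - p - 1) (by omega)
    have hconj := hBe.conj (hs (e p)).periodic
    have hinv : (s (e p))⁻¹ = s (e p) := (hs (e p)).inv_eq
    rwa [hinv] at hconj
  have hX : RExpr n (A * (s (e p) * B * s (e p))) ((p:ℕ) + ((q:ℕ) - p - 1)) :=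
    (take_rexpr hn hs hc p (by omega)).mul hXc
  have hu : RExpr n (s (e p) * s (e q)) 2 := (s_rexpr hn hs (e p)).mul (s_rexpr hn hs (e q))
  apply sandwich hn hs hc hX (drop_rexpr hn hs hc ((q:ℕ)+1)) hu h2 hd
  have := q.isLt
  omega

lemma trip_mem (p q : Fin n) (hpq : (p : ℕ) < q)
    (htr : IsReflection n (s (e p) * s (e q) * s (e p)))
    (h1 : reflLength n (s (e p) * s (e q) * s (e p)) = 1) :
    s (e p) * s (e q) * s (e p) ∈ PcW n c := by
  set l := List.ofFn (fun j => s (e j)) with hl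
  have hql : (q : ℕ) < l.length := by rw [hl, List.length_ofFn]; exact q.isLt
  have hgp : l[(p : ℕ)]'(by omega) = s (e p) := by
    simp only [hl, List.getElem_ofFn, Fin.eta]
  have hgq : l[(q : ℕ)] = s (e q) := by
    simp only [hl, List.getElem_ofFn, Fin.eta]
  have hsplit := list_split2 l p q hpq hql
  rw [hgp, hgq] at hsplit
  set A := (l.take (p:ℕ)).prod with hA
  set B := ((l.drop ((p:ℕ)+1)).take ((q:ℕ) - p - 1)).prod with hB
  set C := (l.drop ((q:ℕ)+1)).prod with hC
  have hsp : s (e p) * s (e p) = 1 := (hs (e p)).mul_self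
  have hkey : ∀ X : Equiv.Perm ℤ, s (e p) * (s (e p) * X) = X := fun X => by
    rw [← mul_assoc, hsp, one_mul]
  have hd : c = (A * (s (e p) * B * s (e p))) * (s (e p) * s (e q) * s (e p))
      * (s (e p) * C) := by
    rw [hc, hsplit]
    simp only [mul_assoc, hkey]
  have hXc : RExpr n (s (e p) * B * s (e p)) ((q:ℕ) - p - 1) := by
    have hBe : RExpr n B ((q:ℕ) - p - 1) := mid_rexpr hn hs hc ((p:ℕ)+1) ((q:ℕ) - p - 1) (by omega)
    have hconj := hBe.conj (hs (e p)).periodic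
    have hinv : (s (e p))⁻¹ = s (e p) := (hs (e p)).inv_eq
    rwa [hinv] at hconj
  have hX : RExpr n (A * (s (e p) * B * s (e p))) ((p:ℕ) + ((q:ℕ) - p - 1)) :=
    (take_rexpr hn hs hc p (by omega)).mul hXc
  have hY : RExpr n (s (e p) * C) (1 + (n - ((q:ℕ)+1))) :=
    (s_rexpr hn hs (e p)).mul (drop_rexpr hn hs hc ((q:ℕ)+1))
  have ht : RExpr n (s (e p) * s (e q) * s (e p)) 1 :=
    ⟨[s (e p) * s (e q) * s (e p)], rfl, by simpa using htr, by simp⟩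
  apply sandwich hn hs hc hX hY ht h1 hd
  have := q.isLt
  omega

end Ctx

end S8
section S9

variable {n : ℕ}

lemma IsTransposition.shift {a b : ℤ} {w : Equiv.Perm ℤ} (h : IsTransposition n a b w)
    (t : ℤ) : IsTransposition n (a + t * n) (b + t * n) w := by
  refine ⟨fun k => ?_, fun k => ?_, fun x hxa hxb => ?_⟩
  · have h2 := h.1 (t + k)
    have e1 : a + (t + k) * (n:ℤ) = a + t * n + k * n := by ring
    rw [e1] at h2
    rw [h2]; ring
  · have h2 := h.2.1 (t + k)
    have e1 : b + (t + k) * (n:ℤ) = b + t * n + k * n := by ring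
    rw [e1] at h2
    rw [h2]; ring
  · apply h.apply_fix
    · intro hd
      apply hxa
      obtain ⟨k, hk⟩ := hd
      exact ⟨k - t, by linear_combination hk⟩
    · intro hd
      apply hxb
      obtain ⟨k, hk⟩ := hd
      exact ⟨k - t, by linear_combination hk⟩

lemma dual_of_mul {c : Equiv.Perm ℤ} {w w' : Equiv.Perm ℤ}
    (hw : w ∈ PcW n c) (hw' : w' ∈ PcW n c) (hww' : w * w' ∈ PcW n c)
    (hadd : reflLength n (w * w') = reflLength n w + reflLength n w') :
    PresentedGroup.of (rels := dualGroupRels n c) (⟨w, hw⟩ : PcW n c) *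
      PresentedGroup.of (rels := dualGroupRels n c) (⟨w', hw'⟩ : PcW n c) =
    PresentedGroup.of (rels := dualGroupRels n c) (⟨w * w', hww'⟩ : PcW n c) := by
  have hrel : FreeGroup.of (⟨w, hw⟩ : PcW n c) * FreeGroup.of (⟨w', hw'⟩ : PcW n c) *
      (FreeGroup.of (⟨w * w', hww'⟩ : PcW n c))⁻¹ ∈ dualGroupRels n c :=
    ⟨⟨w, hw⟩, ⟨w', hw'⟩, hww', hadd, rfl⟩
  have h1 : PresentedGroup.mk (dualGroupRels n c)
      (FreeGroup.of (⟨w, hw⟩ : PcW n c) * FreeGroup.of (⟨w', hw'⟩ : PcW n c) *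
        (FreeGroup.of (⟨w * w', hww'⟩ : PcW n c))⁻¹) = 1 := by
    apply (QuotientGroup.eq_one_iff _).mpr
    exact Subgroup.subset_normalClosure hrel
  rw [map_mul, map_mul, map_inv] at h1
  exact mul_inv_eq_one.mp h1

lemma dual_of_congr {c : Equiv.Perm ℤ} {w w' : Equiv.Perm ℤ} (h : w = w')
    (hw : w ∈ PcW n c) (hw' : w' ∈ PcW n c) :
    PresentedGroup.of (rels := dualGroupRels n c) (⟨w, hw⟩ : PcW n c) =
      PresentedGroup.of (rels := dualGroupRels n c) (⟨w', hw'⟩ : PcW n c) := by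
  subst h; rfl

section Ctx2

variable (hn : 3 ≤ n) {c : Equiv.Perm ℤ} {s : Fin n → Equiv.Perm ℤ}
  (hs : ∀ i : Fin n, IsTransposition n ((i : ℤ) + 1) ((i : ℤ) + 2) (s i))
  {e : Equiv.Perm (Fin n)} (hc : c = (List.ofFn (fun j => s (e j))).prod)

include hn hs hc

lemma braid_rel (i j : Fin n) (hij : ((i : ℕ) + 1) % n = (j : ℕ)) :
    PresentedGroup.of (rels := dualGroupRels n c) (⟨s i, mem_s hn hs hc i⟩ : PcW n c) *
      PresentedGroup.of (⟨s j, mem_s hn hs hc j⟩ : PcW n c) *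
      PresentedGroup.of (⟨s i, mem_s hn hs hc i⟩ : PcW n c) =
    PresentedGroup.of (⟨s j, mem_s hn hs hc j⟩ : PcW n c) *
      PresentedGroup.of (⟨s i, mem_s hn hs hc i⟩ : PcW n c) *
      PresentedGroup.of (⟨s j, mem_s hn hs hc j⟩ : PcW n c) := by
  have hn2 : 2 ≤ n := by omega
  have hiv := i.isLt
  have hjv := j.isLt
  set a : ℤ := (i : ℤ) + 1 with ha
  have hsi : IsTransposition n a (a + 1) (s i) := sIT hn hs i
  -- s j is the transposition of classes (a+1, a+2)
  have hsj2 : IsTransposition n (a + 1) (a + 2) (s j) := by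
    have hcase : (j : ℕ) = (i : ℕ) + 1 ∨ ((i : ℕ) + 1 = n ∧ (j : ℕ) = 0) := by
      rcases Nat.lt_or_ge ((i:ℕ)+1) n with hlt | hge
      · left; rw [Nat.mod_eq_of_lt hlt] at hij; omega
      · right
        have hin : (i:ℕ)+1 = n := by omega
        rw [hin, Nat.mod_self] at hij
        omega
    rcases hcase with hcase | ⟨hcase1, hcase2⟩
    · have hj : (j : ℤ) = (i : ℤ) + 1 := by exact_mod_cast congrArg (Nat.cast : ℕ → ℤ) hcase
      have h0 := sIT hn hs j
      rw [hj] at h0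
      have e1 : ((i:ℤ) + 1) + 1 = a + 1 := by rw [ha]
      have e2 : (((i:ℤ) + 1) + 1) + 1 = a + 2 := by rw [ha]; ring
      rw [e1, e2] at h0
      exact h0
    · have hj : (j : ℤ) = 0 := by exact_mod_cast congrArg (Nat.cast : ℕ → ℤ) hcase2
      have hi : (i : ℤ) + 1 = n := by exact_mod_cast congrArg (Nat.cast : ℕ → ℤ) hcase1
      have h0 := (sIT hn hs j).shift 1
      rw [hj] at h0
      have e1 : (0:ℤ) + 1 + 1 * (n:ℤ) = a + 1 := by rw [ha]; linear_combination -hi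
      have e2 : ((0:ℤ) + 1 + 1) + 1 * (n:ℤ) = a + 2 := by rw [ha]; linear_combination -hi
      rw [e1, e2] at h0
      exact h0
  have hij_ne : i ≠ j := by
    intro hcon
    subst hcon
    rcases Nat.lt_or_ge ((i:ℕ)+1) n with hlt | hge
    · rw [Nat.mod_eq_of_lt hlt] at hij; omega
    · have hin : (i:ℕ)+1 = n := by omega
      rw [hin, Nat.mod_self] at hij
      omega
  -- pointwise evaluations
  have hfix_sj_a : s j a = a :=
    hsj2.apply_fix (not_dvd_one_sub hn2) (not_dvd_two_sub hn)
  have hsj_a1 : s j (a + 1) = a + 2 := by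
    rw [hsj2.apply_a ⟨0, by ring⟩]; ring
  have hsj_a2 : s j (a + 2) = a + 1 := by
    rw [hsj2.apply_b ⟨0, by ring⟩]; ring
  have hsi_a : s i a = a + 1 := by
    rw [hsi.apply_a ⟨0, by ring⟩]; ring
  have hsi_a1 : s i (a + 1) = a := by
    rw [hsi.apply_b ⟨0, by ring⟩]; ring
  have hfix_si_a2 : s i (a + 2) = a + 2 := by
    apply hsi.apply_fix
    · intro hd
      exact not_dvd_two' hn (by rwa [show a + 2 - a = 2 by ring] at hd)
    · intro hd
      exact not_dvd_one' hn2 (by rwa [show a + 2 - (a+1) = 1 by ring] at hd)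
  -- lengths of the two products
  have q12 : ¬ (n:ℤ) ∣ a - (a + 1) := not_dvd_one_sub hn2
  have q13 : ¬ (n:ℤ) ∣ a - (a + 2) := not_dvd_two_sub hn
  have q23 : ¬ (n:ℤ) ∣ (a + 1) - (a + 2) := not_dvd_one_sub hn2
  have hu_len : reflLength n (s i * s j) = 2 := by
    apply reflLength_two_of ((s_rexpr hn hs i).mul (s_rexpr hn hs j)) q12 q13 q23
    · show s i (s j a) ≠ a
      rw [hfix_sj_a, hsi_a]; omega
    · show s i (s j (a + 1)) ≠ a + 1
      rw [hsj_a1, hfix_si_a2]; omega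
    · show s i (s j (a + 2)) ≠ a + 2
      rw [hsj_a2, hsi_a1]; omega
  have hu'_len : reflLength n (s j * s i) = 2 := by
    apply reflLength_two_of ((s_rexpr hn hs j).mul (s_rexpr hn hs i)) q12 q13 q23
    · show s j (s i a) ≠ a
      rw [hsi_a, hsj_a1]; omega
    · show s j (s i (a + 1)) ≠ a + 1
      rw [hsi_a1, hfix_sj_a]; omega
    · show s j (s i (a + 2)) ≠ a + 2
      rw [hfix_si_a2, hsj_a2]; omega
  -- the long reflection
  have ht_it : IsTransposition n a (a + 2) (s i * s j * s i) := braid_aux1 hn hsi hsj2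
  have ht_it' : IsTransposition n a (a + 2) (s j * s i * s j) := braid_aux2 hn hsi hsj2
  have hbraid : s i * s j * s i = s j * s i * s j := braid_eq hn hsi hsj2
  have ht_refl : IsReflection n (s i * s j * s i) := ⟨a, a + 2, q13, ht_it⟩
  have ht_len : reflLength n (s i * s j * s i) = 1 := by
    apply reflLength_one_of ht_refl
    apply ne_one_of_apply (x := a)
    rw [ht_it.apply_base]
    omega
  -- involution facts
  have hsi_sq : s i * s i = 1 := (hs i).mul_self
  have hsj_sq : s j * s j = 1 := (hs j).mul_self
  -- positions
  set p : Fin n := e.symm i with hp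
  set q : Fin n := e.symm j with hq
  have hep : e p = i := e.apply_symm_apply i
  have heq : e q = j := e.apply_symm_apply j
  have hpq_ne : (p : ℕ) ≠ (q : ℕ) := by
    intro hcon
    exact hij_ne (by rw [← hep, ← heq]; congr 1; exact Fin.ext hcon)
  rcases Nat.lt_or_ge (p : ℕ) (q : ℕ) with hlt | hge
  · -- i comes first
    have hu_mem : s i * s j ∈ PcW n c := by
      have := pair_mem hn hs hc p q hlt (by rw [hep, heq]; exact hu_len)
      rwa [hep, heq] at this
    have ht_mem : s i * s j * s i ∈ PcW n c := by
      have := trip_mem hn hs hc p q hlt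
        (by rw [hep, heq]; exact ht_refl) (by rw [hep, heq]; exact ht_len)
      rwa [hep, heq] at this
    have hsjt : s j * (s i * s j * s i) = s i * s j := by
      rw [hbraid]
      calc s j * (s j * s i * s j) = (s j * s j) * (s i * s j) := by
            simp only [mul_assoc]
        _ = s i * s j := by rw [hsj_sq, one_mul]
    have htsi : (s i * s j * s i) * s i = s i * s j := by
      calc (s i * s j * s i) * s i = (s i * s j) * (s i * s i) := by
            simp only [mul_assoc]
        _ = s i * s j := by rw [hsi_sq, mul_one]
    have hsjt_mem : s j * (s i * s j * s i) ∈ PcW n c := by rw [hsjt]; exact hu_mem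
    have htsi_mem : (s i * s j * s i) * s i ∈ PcW n c := by rw [htsi]; exact hu_mem
    have E1 := dual_of_mul (mem_s hn hs hc i) (mem_s hn hs hc j) hu_mem
      (by rw [hu_len, s_len hn hs i, s_len hn hs j])
    have E2 := dual_of_mul (mem_s hn hs hc j) ht_mem hsjt_mem
      (by rw [hsjt, hu_len, s_len hn hs j, ht_len])
    have E3 := dual_of_mul ht_mem (mem_s hn hs hc i) htsi_mem
      (by rw [htsi, hu_len, s_len hn hs i, ht_len])
    have E2' : PresentedGroup.of (rels := dualGroupRels n c) (⟨s j, mem_s hn hs hc j⟩ : PcW n c) *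
        PresentedGroup.of (⟨s i * s j * s i, ht_mem⟩ : PcW n c) =
        PresentedGroup.of (⟨s i * s j, hu_mem⟩ : PcW n c) := by
      rw [E2]
      exact dual_of_congr hsjt hsjt_mem hu_mem
    have E3' : PresentedGroup.of (rels := dualGroupRels n c)
        (⟨s i * s j * s i, ht_mem⟩ : PcW n c) *
        PresentedGroup.of (⟨s i, mem_s hn hs hc i⟩ : PcW n c) =
        PresentedGroup.of (⟨s i * s j, hu_mem⟩ : PcW n c) := by
      rw [E3]
      exact dual_of_congr htsi htsi_mem hu_mem
    calc PresentedGroup.of (⟨s i, mem_s hn hs hc i⟩ : PcW n c) *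
          PresentedGroup.of (⟨s j, mem_s hn hs hc j⟩ : PcW n c) *
          PresentedGroup.of (⟨s i, mem_s hn hs hc i⟩ : PcW n c)
        = PresentedGroup.of (⟨s i * s j, hu_mem⟩ : PcW n c) *
          PresentedGroup.of (⟨s i, mem_s hn hs hc i⟩ : PcW n c) := by rw [E1]
      _ = PresentedGroup.of (⟨s j, mem_s hn hs hc j⟩ : PcW n c) *
          (PresentedGroup.of (⟨s i * s j * s i, ht_mem⟩ : PcW n c) *
           PresentedGroup.of (⟨s i, mem_s hn hs hc i⟩ : PcW n c)) := by
            rw [← E2', mul_assoc]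
      _ = PresentedGroup.of (⟨s j, mem_s hn hs hc j⟩ : PcW n c) *
          PresentedGroup.of (⟨s i * s j, hu_mem⟩ : PcW n c) := by rw [E3']
      _ = PresentedGroup.of (⟨s j, mem_s hn hs hc j⟩ : PcW n c) *
          (PresentedGroup.of (⟨s i, mem_s hn hs hc i⟩ : PcW n c) *
           PresentedGroup.of (⟨s j, mem_s hn hs hc j⟩ : PcW n c)) := by rw [← E1]
      _ = _ := by rw [mul_assoc]
  · -- j comes first
    have hlt : (q : ℕ) < (p : ℕ) := by omega
    have hu_mem : s j * s i ∈ PcW n c := by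
      have := pair_mem hn hs hc q p hlt (by rw [hep, heq]; exact hu'_len)
      rwa [hep, heq] at this
    have ht2_refl : IsReflection n (s j * s i * s j) := ⟨a, a + 2, q13, ht_it'⟩
    have ht2_len : reflLength n (s j * s i * s j) = 1 := by
      rw [← hbraid]; exact ht_len
    have ht_mem : s j * s i * s j ∈ PcW n c := by
      have := trip_mem hn hs hc q p hlt
        (by rw [hep, heq]; exact ht2_refl) (by rw [hep, heq]; exact ht2_len)
      rwa [hep, heq] at this
    have hsit : s i * (s j * s i * s j) = s j * s i := by
      rw [← hbraid]
      calc s i * (s i * s j * s i) = (s i * s i) * (s j * s i) := by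
            simp only [mul_assoc]
        _ = s j * s i := by rw [hsi_sq, one_mul]
    have htsj : (s j * s i * s j) * s j = s j * s i := by
      calc (s j * s i * s j) * s j = (s j * s i) * (s j * s j) := by
            simp only [mul_assoc]
        _ = s j * s i := by rw [hsj_sq, mul_one]
    have hsit_mem : s i * (s j * s i * s j) ∈ PcW n c := by rw [hsit]; exact hu_mem
    have htsj_mem : (s j * s i * s j) * s j ∈ PcW n c := by rw [htsj]; exact hu_mem
    have E1 := dual_of_mul (mem_s hn hs hc j) (mem_s hn hs hc i) hu_mem
      (by rw [hu'_len, s_len hn hs i, s_len hn hs j])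
    have E2 := dual_of_mul (mem_s hn hs hc i) ht_mem hsit_mem
      (by rw [hsit, hu'_len, s_len hn hs i, ht2_len])
    have E3 := dual_of_mul ht_mem (mem_s hn hs hc j) htsj_mem
      (by rw [htsj, hu'_len, s_len hn hs j, ht2_len])
    have E2' : PresentedGroup.of (rels := dualGroupRels n c) (⟨s i, mem_s hn hs hc i⟩ : PcW n c) *
        PresentedGroup.of (⟨s j * s i * s j, ht_mem⟩ : PcW n c) =
        PresentedGroup.of (⟨s j * s i, hu_mem⟩ : PcW n c) := by
      rw [E2]
      exact dual_of_congr hsit hsit_mem hu_mem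
    have E3' : PresentedGroup.of (rels := dualGroupRels n c)
        (⟨s j * s i * s j, ht_mem⟩ : PcW n c) *
        PresentedGroup.of (⟨s j, mem_s hn hs hc j⟩ : PcW n c) =
        PresentedGroup.of (⟨s j * s i, hu_mem⟩ : PcW n c) := by
      rw [E3]
      exact dual_of_congr htsj htsj_mem hu_mem
    symm
    calc PresentedGroup.of (⟨s j, mem_s hn hs hc j⟩ : PcW n c) *
          PresentedGroup.of (⟨s i, mem_s hn hs hc i⟩ : PcW n c) *
          PresentedGroup.of (⟨s j, mem_s hn hs hc j⟩ : PcW n c)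
        = PresentedGroup.of (⟨s j * s i, hu_mem⟩ : PcW n c) *
          PresentedGroup.of (⟨s j, mem_s hn hs hc j⟩ : PcW n c) := by rw [E1]
      _ = PresentedGroup.of (⟨s i, mem_s hn hs hc i⟩ : PcW n c) *
          (PresentedGroup.of (⟨s j * s i * s j, ht_mem⟩ : PcW n c) *
           PresentedGroup.of (⟨s j, mem_s hn hs hc j⟩ : PcW n c)) := by
            rw [← E2', mul_assoc]
      _ = PresentedGroup.of (⟨s i, mem_s hn hs hc i⟩ : PcW n c) *
          PresentedGroup.of (⟨s j * s i, hu_mem⟩ : PcW n c) := by rw [E3']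
      _ = PresentedGroup.of (⟨s i, mem_s hn hs hc i⟩ : PcW n c) *
          (PresentedGroup.of (⟨s j, mem_s hn hs hc j⟩ : PcW n c) *
           PresentedGroup.of (⟨s i, mem_s hn hs hc i⟩ : PcW n c)) := by rw [← E1]
      _ = _ := by rw [mul_assoc]

lemma fin_noncong_of_ne {i j : Fin n} (hne : i ≠ j) :
    ¬ (n:ℤ) ∣ ((i : ℤ) + 1) - ((j : ℤ) + 1) := by
  intro hd
  have hiv := i.isLt
  have hjv := j.isLt
  have h0 : ((i:ℤ) + 1) - ((j:ℤ) + 1) = 0 := by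
    apply dvd_window (by omega) _ _ hd
    · omega
    · omega
  exact hne (Fin.ext (by omega))

lemma fin_noncong_of_not_adj {i j : Fin n} (h : ((i : ℕ) + 1) % n ≠ (j : ℕ)) :
    ¬ (n:ℤ) ∣ (((i : ℤ) + 1) + 1) - ((j : ℤ) + 1) := by
  intro hd
  apply h
  have hiv := i.isLt
  have hjv := j.isLt
  obtain ⟨k, hk⟩ := hd
  have hk0 : k = 0 ∨ k = 1 := by
    have h1 : -(n:ℤ) < n * k := by omega
    have h2 : (n:ℤ) * k ≤ n := by omega
    have h3 : (0:ℤ) < n := by omega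
    have hk1 : k < 2 := by nlinarith
    have hk2 : -1 < k := by nlinarith
    omega
  rcases hk0 with rfl | rfl
  · simp only [mul_zero] at hk
    have hji : (j:ℕ) = (i:ℕ) + 1 := by omega
    rw [hji]
    exact Nat.mod_eq_of_lt (by omega)
  · simp only [mul_one] at hk
    have hin : (i:ℕ) + 1 = n := by omega
    have hj0 : (j:ℕ) = 0 := by omega
    rw [hin, Nat.mod_self, hj0]

lemma comm_rel (i j : Fin n) (h1 : ((i : ℕ) + 1) % n ≠ (j : ℕ))
    (h2 : ((j : ℕ) + 1) % n ≠ (i : ℕ)) :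
    PresentedGroup.of (rels := dualGroupRels n c) (⟨s i, mem_s hn hs hc i⟩ : PcW n c) *
      PresentedGroup.of (⟨s j, mem_s hn hs hc j⟩ : PcW n c) =
    PresentedGroup.of (⟨s j, mem_s hn hs hc j⟩ : PcW n c) *
      PresentedGroup.of (⟨s i, mem_s hn hs hc i⟩ : PcW n c) := by
  have hn2 : 2 ≤ n := by omega
  by_cases hij : i = j
  · subst hij; rfl
  set a : ℤ := (i : ℤ) + 1 with ha
  set b : ℤ := (j : ℤ) + 1 with hb
  have hsi : IsTransposition n a (a + 1) (s i) := sIT hn hs i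
  have hsj : IsTransposition n b (b + 1) (s j) := sIT hn hs j
  have q1 : ¬ (n:ℤ) ∣ a - b := fin_noncong_of_ne hn hs hc hij
  have q3 : ¬ (n:ℤ) ∣ (a + 1) - b := fin_noncong_of_not_adj hn hs hc h1
  have q2 : ¬ (n:ℤ) ∣ a - (b + 1) := by
    intro hd
    apply fin_noncong_of_not_adj hn hs hc h2
    obtain ⟨k, hk⟩ := hd
    exact ⟨-k, by linear_combination -hk⟩
  have q4 : ¬ (n:ℤ) ∣ (a + 1) - (b + 1) := by
    intro hd
    apply q1
    obtain ⟨k, hk⟩ := hd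
    exact ⟨k, by linear_combination hk⟩
  have hcomm : s i * s j = s j * s i := IT_commute hsi hsj q1 q2 q3 q4
  -- evaluations for length
  have hfix_sj_a : s j a = a := hsj.apply_fix (cong_not_cong ⟨0, by ring⟩ q1)
    (cong_not_cong ⟨0, by ring⟩ q2)
  have hfix_sj_a1 : s j (a + 1) = a + 1 := hsj.apply_fix (cong_not_cong ⟨0, by ring⟩ q3)
    (cong_not_cong ⟨0, by ring⟩ q4)
  have hsi_a : s i a = a + 1 := by rw [hsi.apply_a ⟨0, by ring⟩]; ring
  have hsi_a1 : s i (a + 1) = a := by rw [hsi.apply_b ⟨0, by ring⟩]; ring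
  have hsj_b : s j b = b + 1 := by rw [hsj.apply_a ⟨0, by ring⟩]; ring
  have q2' : ¬ (n:ℤ) ∣ (b + 1) - a := by
    intro hd
    apply q2
    obtain ⟨k, hk⟩ := hd
    exact ⟨-k, by linear_combination -hk⟩
  have q4' : ¬ (n:ℤ) ∣ (b + 1) - (a + 1) := by
    intro hd
    apply q4
    obtain ⟨k, hk⟩ := hd
    exact ⟨-k, by linear_combination -hk⟩
  have hfix_si_b1 : s i (b + 1) = b + 1 :=
    hsi.apply_fix (cong_not_cong ⟨0, by ring⟩ q2') (cong_not_cong ⟨0, by ring⟩ q4')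
  have hu_len : reflLength n (s i * s j) = 2 := by
    have q23' : ¬ (n:ℤ) ∣ (a + 1) - b := q3
    apply reflLength_two_of ((s_rexpr hn hs i).mul (s_rexpr hn hs j))
      (not_dvd_one_sub hn2) q1 (z3 := b) q23'
    · show s i (s j a) ≠ a
      rw [hfix_sj_a, hsi_a]; omega
    · show s i (s j (a + 1)) ≠ a + 1
      rw [hfix_sj_a1, hsi_a1]; omega
    · show s i (s j b) ≠ b
      rw [hsj_b, hfix_si_b1]; omega
  have hu'_len : reflLength n (s j * s i) = 2 := by rw [← hcomm]; exact hu_len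
  -- membership
  set p : Fin n := e.symm i with hp
  set q : Fin n := e.symm j with hq
  have hep : e p = i := e.apply_symm_apply i
  have heq : e q = j := e.apply_symm_apply j
  have hpq_ne : (p : ℕ) ≠ (q : ℕ) := by
    intro hcon
    exact hij (by rw [← hep, ← heq]; congr 1; exact Fin.ext hcon)
  have hu_mem : s i * s j ∈ PcW n c := by
    rcases Nat.lt_or_ge (p : ℕ) (q : ℕ) with hlt | hge
    · have := pair_mem hn hs hc p q hlt (by rw [hep, heq]; exact hu_len)
      rwa [hep, heq] at this
    · have hlt : (q : ℕ) < (p : ℕ) := by omega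
      have := pair_mem hn hs hc q p hlt (by rw [hep, heq]; exact hu'_len)
      rw [hep, heq] at this
      rwa [hcomm]
  have hu'_mem : s j * s i ∈ PcW n c := by rw [← hcomm]; exact hu_mem
  have E1 := dual_of_mul (mem_s hn hs hc i) (mem_s hn hs hc j) hu_mem
    (by rw [hu_len, s_len hn hs i, s_len hn hs j])
  have E2 := dual_of_mul (mem_s hn hs hc j) (mem_s hn hs hc i) hu'_mem
    (by rw [hu'_len, s_len hn hs i, s_len hn hs j])
  rw [E1, E2]
  exact dual_of_congr hcomm hu_mem hu'_mem

end Ctx2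

end S9
theorem statement12 (n : ℕ) (hn : 3 ≤ n) (c : Equiv.Perm ℤ)
    (s : Fin n → Equiv.Perm ℤ)
    (hs : ∀ i : Fin n, IsTransposition n ((i : ℤ) + 1) ((i : ℤ) + 2) (s i))
    (e : Equiv.Perm (Fin n)) (hc : c = (List.ofFn (fun j => s (e j))).prod) :
    ∃ f : AffineBraidGroup n →* DualGroup n c,
      ∀ i : Fin n, ∃ hi : s i ∈ PcW n c,
        f (PresentedGroup.of (rels := affineBraidRels n) i) =
          PresentedGroup.of (rels := dualGroupRels n c) (⟨s i, hi⟩ : PcW n c) := by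
  classical
  have hrels : ∀ r ∈ affineBraidRels n,
      FreeGroup.lift (fun i : Fin n =>
        PresentedGroup.of (rels := dualGroupRels n c) (⟨s i, mem_s hn hs hc i⟩ : PcW n c)) r
        = 1 := by
    intro r hr
    rcases hr with ⟨i, j, hij, rfl⟩ | ⟨i, j, h1, h2, rfl⟩
    · simp only [map_mul, map_inv, FreeGroup.lift_apply_of]
      rw [mul_inv_eq_one]
      exact braid_rel hn hs hc i j hij
    · by_cases hij2 : i = j
      · subst hij2
        simp only [map_mul, map_inv, FreeGroup.lift_apply_of]
        group
      · simp only [map_mul, map_inv, FreeGroup.lift_apply_of]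
        rw [mul_inv_eq_one]
        exact comm_rel hn hs hc i j h1 h2
  refine ⟨PresentedGroup.toGroup hrels, fun i => ⟨mem_s hn hs hc i, ?_⟩⟩
  rw [PresentedGroup.toGroup.of]
end

section
/- Let c be a Coxeter element of W with X, Ξ as above, s = |X ∩ [1,n]| and t = |Ξ ∩ [1,n]|, and let (i,j) be a reflection dividing c. Consider the orbit of (i,j) under the map r ↦ c r c⁻¹ (which preserves the set of reflections dividing c). If i and j both lie in X, this orbit is finite with exactly s elements; if i and j both lie in Ξ, it is finite with exactly t elements; and if one of i,j lies in X and the other in Ξ, it is infinite. -/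
/-- `w` is the `n`-periodic cycle `(L)_{[h]}` : it sends the `i`-th entry of `L`
(translated by `k * n`) to the `(i+1)`-th one, the last entry to the first one
shifted by `h * n`, and fixes every integer not congruent mod `n` to an entry of `L`. -/
def IsCycleList (n : ℕ) (L : List ℤ) (h : ℤ) (w : Equiv.Perm ℤ) : Prop :=
  (∀ i : ℕ, i + 1 < L.length → ∀ k : ℤ,
      w (L.getD i 0 + k * n) = L.getD (i + 1) 0 + k * n) ∧
  (∀ hL : L ≠ [], ∀ k : ℤ, w (L.getLast hL + k * n) = L.head hL + (h + k) * n) ∧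
  (∀ x : ℤ, (∀ a ∈ L, ¬ (n : ℤ) ∣ (x - a)) → w x = x)

/-- The data of a decomposition `c = (a_1,…,a_s)_{[1]} ∘ (α_t,…,α_1)_{[-1]}` of a
Coxeter element, for a partition `{1,…,n} = {a_1<…<a_s} ⊔ {α_1<…<α_t}` into two
nonempty parts. -/
structure CoxeterDecomp (n : ℕ) (c : Equiv.Perm ℤ) where
  s : ℕ
  t : ℕ
  a : ℕ → ℤ
  al : ℕ → ℤ
  u : Equiv.Perm ℤ
  v : Equiv.Perm ℤ
  hs : 1 ≤ s
  ht : 1 ≤ t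
  hst : s + t = n
  ha_mono : ∀ i j, 1 ≤ i → i < j → j ≤ s → a i < a j
  hal_mono : ∀ i j, 1 ≤ i → i < j → j ≤ t → al i < al j
  ha_mem : ∀ i, 1 ≤ i → i ≤ s → 1 ≤ a i ∧ a i ≤ n
  hal_mem : ∀ i, 1 ≤ i → i ≤ t → 1 ≤ al i ∧ al i ≤ n
  hdisj : ∀ i j, 1 ≤ i → i ≤ s → 1 ≤ j → j ≤ t → a i ≠ al j
  hcover : ∀ x : ℤ, 1 ≤ x → x ≤ n →
      (∃ i, 1 ≤ i ∧ i ≤ s ∧ a i = x) ∨ (∃ j, 1 ≤ j ∧ j ≤ t ∧ al j = x)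
  hu : IsCycleList n ((List.range' 1 s).map a) 1 u
  hv : IsCycleList n (((List.range' 1 t).map al).reverse) (-1) v
  hc : c = u * v

/-- The set `{f 1, …, f s} + nℤ`. -/
def latticeSet (n : ℕ) (s : ℕ) (f : ℕ → ℤ) : Set ℤ :=
  {x | ∃ i : ℕ, 1 ≤ i ∧ i ≤ s ∧ ∃ k : ℤ, x = f i + k * n}

lemma perm_apply_inv_self (w : Equiv.Perm ℤ) (x : ℤ) : w (w⁻¹ x) = x :=
  (Equiv.eq_symm_apply w).mp rfl

lemma perm_inv_apply_self (w : Equiv.Perm ℤ) (x : ℤ) : w⁻¹ (w x) = x :=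
  Equiv.Perm.inv_eq_iff_eq.mpr rfl

lemma dvd_small {n x : ℤ} (h : n ∣ x) (h2 : |x| < n) : x = 0 := by
  by_contra hx
  have h1 : n ∣ |x| := (dvd_abs n x).mpr h
  have := Int.le_of_dvd (abs_pos.mpr hx) h1
  omega

lemma eq_of_dvd_range {n x y : ℤ} (h : n ∣ x - y)
    (hx : 1 ≤ x) (hx' : x ≤ n) (hy : 1 ≤ y) (hy' : y ≤ n) : x = y := by
  have := dvd_small h (by rw [abs_sub_lt_iff]; omega)
  omega

lemma not_dvd_of_ne {n x y : ℤ} (hne : x ≠ y) (hx : 1 ≤ x) (hx' : x ≤ n)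
    (hy : 1 ≤ y) (hy' : y ≤ n) : ¬ n ∣ x - y :=
  fun hd => hne (eq_of_dvd_range hd hx hx' hy hy')

lemma per_apply {n : ℕ} {w : Equiv.Perm ℤ} (hw : IsPeriodic n w) :
    ∀ (k : ℤ) (x : ℤ), w (x + k * n) = w x + k * n := by
  intro k
  induction k using Int.induction_on with
  | zero => simp
  | succ i ih =>
    intro x
    have h1 := hw (x + (i : ℤ) * n)
    have h2 : x + ((i : ℤ) + 1) * n = (x + (i : ℤ) * n) + n := by ring
    rw [h2, h1, ih x]; ring
  | pred i ih =>
    intro x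
    have h1 := hw (x + (-(i : ℤ) - 1) * n)
    have h2 : x + (-(i : ℤ) - 1) * n + n = x + (-(i : ℤ)) * n := by ring
    rw [h2, ih x] at h1
    have : w (x + (-(i : ℤ) - 1) * n) = w x + (-(i : ℤ)) * n - n := by linarith
    rw [this]; ring

lemma per_inv {n : ℕ} {w : Equiv.Perm ℤ} (hw : IsPeriodic n w) : IsPeriodic n w⁻¹ := by
  intro x
  apply w.injective
  rw [perm_apply_inv_self]
  have : w (w⁻¹ x + n) = w (w⁻¹ x) + n := hw _
  rw [this, perm_apply_inv_self]

lemma per_mul {n : ℕ} {w₁ w₂ : Equiv.Perm ℤ} (h1 : IsPeriodic n w₁) (h2 : IsPeriodic n w₂) :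
    IsPeriodic n (w₁ * w₂) := by
  intro x
  rw [Equiv.Perm.mul_apply, Equiv.Perm.mul_apply, h2, h1]

lemma per_pow {n : ℕ} {w : Equiv.Perm ℤ} (hw : IsPeriodic n w) (m : ℕ) : IsPeriodic n (w ^ m) := by
  induction m with
  | zero => intro x; simp
  | succ m ih => rw [pow_succ]; exact per_mul ih hw

lemma per_zpow {n : ℕ} {w : Equiv.Perm ℤ} (hw : IsPeriodic n w) (m : ℤ) : IsPeriodic n (w ^ m) := by
  cases m with
  | ofNat m => rw [Int.ofNat_eq_coe, zpow_natCast]; exact per_pow hw m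
  | negSucc m => rw [zpow_negSucc]; exact per_inv (per_pow hw (m + 1))

lemma trsp_fst {n : ℕ} {i j : ℤ} {r : Equiv.Perm ℤ} (hr : IsTransposition n i j r) : r i = j := by
  have := hr.1 0; simpa using this

lemma trsp_symm {n : ℕ} {i j : ℤ} {r : Equiv.Perm ℤ} (hr : IsTransposition n i j r) :
    IsTransposition n j i r :=
  ⟨hr.2.1, hr.1, fun x h1 h2 => hr.2.2 x h2 h1⟩

lemma trsp_shift {n : ℕ} {i j : ℤ} {r : Equiv.Perm ℤ} (hr : IsTransposition n i j r) (m : ℤ) :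
    IsTransposition n (i + m * n) (j + m * n) r := by
  refine ⟨fun k => ?_, fun k => ?_, fun x h1 h2 => ?_⟩
  · rw [show i + m * n + k * n = i + (m + k) * n by ring, hr.1 (m + k)]; ring
  · rw [show j + m * n + k * n = j + (m + k) * n by ring, hr.2.1 (m + k)]; ring
  · refine hr.2.2 x (fun hd => h1 ?_) (fun hd => h2 ?_)
    · rw [show x - (i + m * n) = (x - i) - m * n by ring]
      exact dvd_sub hd ⟨m, by ring⟩
    · rw [show x - (j + m * n) = (x - j) - m * n by ring]
      exact dvd_sub hd ⟨m, by ring⟩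

lemma trsp_unique {n : ℕ} {a b : ℤ} {r₁ r₂ : Equiv.Perm ℤ}
    (h1 : IsTransposition n a b r₁) (h2 : IsTransposition n a b r₂) : r₁ = r₂ := by
  apply Equiv.ext
  intro x
  by_cases hd : (n : ℤ) ∣ x - a
  · obtain ⟨m, hm⟩ := hd
    have hx : x = a + m * n := by linarith [mul_comm (n : ℤ) m]
    rw [hx, h1.1 m, h2.1 m]
  · by_cases hd2 : (n : ℤ) ∣ x - b
    · obtain ⟨m, hm⟩ := hd2
      have hx : x = b + m * n := by linarith [mul_comm (n : ℤ) m]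
      rw [hx, h1.2.1 m, h2.2.1 m]
    · rw [h1.2.2 x hd hd2, h2.2.2 x hd hd2]

lemma trsp_compat {n : ℕ} {a b a' b' : ℤ} {r : Equiv.Perm ℤ}
    (hab : ¬ (n : ℤ) ∣ a - b) (hne : a' ≠ b')
    (h1 : IsTransposition n a b r) (h2 : IsTransposition n a' b' r) :
    (∃ m : ℤ, a' = a + m * n ∧ b' = b + m * n) ∨
    (∃ m : ℤ, a' = b + m * n ∧ b' = a + m * n) := by
  have hra' : r a' = b' := trsp_fst h2
  by_cases hd : (n : ℤ) ∣ a' - a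
  · left
    obtain ⟨m, hm⟩ := hd
    have hx : a' = a + m * n := by linarith [mul_comm (n : ℤ) m]
    refine ⟨m, hx, ?_⟩
    rw [hx, h1.1 m] at hra'
    exact hra'.symm
  · by_cases hd2 : (n : ℤ) ∣ a' - b
    · right
      obtain ⟨m, hm⟩ := hd2
      have hx : a' = b + m * n := by linarith [mul_comm (n : ℤ) m]
      refine ⟨m, hx, ?_⟩
      rw [hx, h1.2.1 m] at hra'
      exact hra'.symm
    · exact absurd (h1.2.2 a' hd hd2 ▸ hra') hne

lemma conj_spec {n : ℕ} {i j : ℤ} {W r : Equiv.Perm ℤ}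
    (hW : IsPeriodic n W) (hr : IsTransposition n i j r) :
    IsTransposition n (W i) (W j) (W * r * W⁻¹) := by
  have hWk : ∀ (y : ℤ) (k : ℤ), W⁻¹ (W y + k * n) = y + k * n := by
    intro y k
    apply W.injective
    rw [perm_apply_inv_self, per_apply hW]
  refine ⟨fun k => ?_, fun k => ?_, fun x h1 h2 => ?_⟩
  · rw [Equiv.Perm.mul_apply, Equiv.Perm.mul_apply, hWk i k, hr.1 k, per_apply hW]
  · rw [Equiv.Perm.mul_apply, Equiv.Perm.mul_apply, hWk j k, hr.2.1 k, per_apply hW]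
  · rw [Equiv.Perm.mul_apply, Equiv.Perm.mul_apply]
    have hy1 : ¬ (n : ℤ) ∣ (W⁻¹ x - i) := by
      rintro ⟨m, hm⟩
      have hx : W⁻¹ x = i + m * n := by linarith [mul_comm (n : ℤ) m]
      apply h1
      have : x = W i + m * n := by
        have := congrArg W hx
        rw [perm_apply_inv_self, per_apply hW] at this
        exact this
      exact ⟨m, by rw [this]; ring⟩
    have hy2 : ¬ (n : ℤ) ∣ (W⁻¹ x - j) := by
      rintro ⟨m, hm⟩
      have hx : W⁻¹ x = j + m * n := by linarith [mul_comm (n : ℤ) m]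
      apply h2
      have : x = W j + m * n := by
        have := congrArg W hx
        rw [perm_apply_inv_self, per_apply hW] at this
        exact this
      exact ⟨m, by rw [this]; ring⟩
    rw [hr.2.2 _ hy1 hy2, perm_apply_inv_self]

lemma traj {n s : ℕ} {a : ℕ → ℤ} {w : Equiv.Perm ℤ} (hs : 1 ≤ s)
    (hw1 : ∀ p, 1 ≤ p → p < s → ∀ k : ℤ, w (a p + k * n) = a (p + 1) + k * n)
    (hw2 : ∀ k : ℤ, w (a s + k * n) = a 1 + (k + 1) * n) :
    ∀ (m : ℕ) (p : ℕ), 1 ≤ p → p ≤ s → ∃ Q C : ℕ, 1 ≤ Q ∧ Q ≤ s ∧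
      ((Q : ℤ) + (s : ℤ) * C = p + m) ∧
      ∀ k : ℤ, (w ^ m) (a p + k * n) = a Q + (k + C) * n := by
  intro m
  induction m with
  | zero =>
    intro p h1 h2
    exact ⟨p, 0, h1, h2, by push_cast; ring, fun k => by simp⟩
  | succ m ih =>
    intro p h1 h2
    obtain ⟨Q, C, hQ1, hQ2, hQC, hfor⟩ := ih p h1 h2
    by_cases hQs : Q < s
    · refine ⟨Q + 1, C, by omega, by omega, by push_cast at hQC ⊢; linarith, fun k => ?_⟩
      rw [pow_succ', Equiv.Perm.mul_apply, hfor k]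
      rw [hw1 Q hQ1 hQs (k + C)]
    · have hQs' : Q = s := by omega
      refine ⟨1, C + 1, le_refl 1, hs, by push_cast at hQC ⊢; linarith, fun k => ?_⟩
      rw [pow_succ', Equiv.Perm.mul_apply, hfor k, hQs', hw2 (k + C)]
      push_cast; ring_nf

lemma pow_s_eq {n s : ℕ} {a : ℕ → ℤ} {w : Equiv.Perm ℤ} (hs : 1 ≤ s)
    (hw1 : ∀ p, 1 ≤ p → p < s → ∀ k : ℤ, w (a p + k * n) = a (p + 1) + k * n)
    (hw2 : ∀ k : ℤ, w (a s + k * n) = a 1 + (k + 1) * n) :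
    ∀ p, 1 ≤ p → p ≤ s → ∀ k : ℤ, (w ^ s) (a p + k * n) = a p + (k + 1) * n := by
  intro p h1 h2 k
  obtain ⟨Q, C, hQ1, hQ2, hQC, hfor⟩ := traj hs hw1 hw2 s p h1 h2
  have hC2 : (C : ℤ) < 2 := by
    by_contra hC
    push_neg at hC
    have hb : (s : ℤ) * 2 ≤ (s : ℤ) * C := by
      apply mul_le_mul_of_nonneg_left hC
      exact_mod_cast Nat.zero_le s
    have hs' : (1 : ℤ) ≤ s := by exact_mod_cast hs
    have hQ1' : (1 : ℤ) ≤ Q := by exact_mod_cast hQ1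
    have hp2' : (p : ℤ) ≤ s := by exact_mod_cast h2
    linarith
  have hCnat : C < 2 := by exact_mod_cast hC2
  interval_cases C
  · exfalso
    simp at hQC
    have hQ2' : (Q : ℤ) ≤ s := by exact_mod_cast hQ2
    have hp1' : (1 : ℤ) ≤ p := by exact_mod_cast h1
    linarith
  · have hQp : (Q : ℤ) = p := by push_cast at hQC; linarith
    have : Q = p := by exact_mod_cast hQp
    rw [this] at hfor
    have := hfor k
    rw [this]
    push_cast; ring_nf

lemma zpow_mult {n s : ℕ} {a : ℕ → ℤ} {w : Equiv.Perm ℤ} (hs : 1 ≤ s)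
    (hw1 : ∀ p, 1 ≤ p → p < s → ∀ k : ℤ, w (a p + k * n) = a (p + 1) + k * n)
    (hw2 : ∀ k : ℤ, w (a s + k * n) = a 1 + (k + 1) * n) :
    ∀ (m : ℤ) (p : ℕ), 1 ≤ p → p ≤ s → ∀ k : ℤ,
      (w ^ ((s : ℤ) * m)) (a p + k * n) = a p + (k + m) * n := by
  have hps := pow_s_eq hs hw1 hw2
  have hws : ∀ p, 1 ≤ p → p ≤ s → ∀ k : ℤ, (w ^ (s : ℤ)) (a p + k * n) = a p + (k + 1) * n := by
    intro p h1 h2 k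
    rw [zpow_natCast]
    exact hps p h1 h2 k
  intro m
  induction m using Int.induction_on with
  | zero => intro p h1 h2 k; simp
  | succ i ih =>
    intro p h1 h2 k
    have he : w ^ ((s : ℤ) * ((i : ℤ) + 1)) = w ^ ((s : ℤ) * i) * w ^ (s : ℤ) := by
      rw [show (s : ℤ) * ((i : ℤ) + 1) = (s : ℤ) * i + s by ring, zpow_add]
    rw [he, Equiv.Perm.mul_apply, hws p h1 h2 k, ih p h1 h2 (k + 1)]
    congr 1
    ring
  | pred i ih =>
    intro p h1 h2 k
    have he : w ^ ((s : ℤ) * (-(i : ℤ))) = w ^ ((s : ℤ) * (-(i : ℤ) - 1)) * w ^ (s : ℤ) := by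
      rw [show (s : ℤ) * (-(i : ℤ)) = (s : ℤ) * (-(i : ℤ) - 1) + s by ring, zpow_add]
    have h0 := ih p h1 h2 (k - 1)
    rw [he, Equiv.Perm.mul_apply, hws p h1 h2 (k - 1)] at h0
    rw [show k - 1 + 1 = k by ring] at h0
    rw [h0]
    ring_nf

lemma upList_getD {s : ℕ} (a : ℕ → ℤ) (i : ℕ) (h : i < s) :
    ((List.range' 1 s).map a).getD i 0 = a (1 + i) := by
  rw [List.getD_eq_getElem?_getD, List.getElem?_eq_getElem (by simp [h])]
  simp

lemma downList_getD {t : ℕ} (al : ℕ → ℤ) (i : ℕ) (h : i < t) :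
    (((List.range' 1 t).map al).reverse).getD i 0 = al (t - i) := by
  rw [List.getD_eq_getElem?_getD, List.getElem?_eq_getElem (by simp [h])]
  simp [List.getElem_reverse]
  congr 1
  omega

lemma cyc_up {n s : ℕ} (hs : 1 ≤ s) {a : ℕ → ℤ} {u : Equiv.Perm ℤ}
    (h : IsCycleList n ((List.range' 1 s).map a) 1 u) :
    (∀ p, 1 ≤ p → p < s → ∀ k : ℤ, u (a p + k * n) = a (p + 1) + k * n) ∧
    (∀ k : ℤ, u (a s + k * n) = a 1 + (k + 1) * n) ∧
    (∀ x : ℤ, (∀ q, 1 ≤ q → q ≤ s → ¬ (n : ℤ) ∣ (x - a q)) → u x = x) := by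
  have hlen : ((List.range' 1 s).map a).length = s := by simp
  have hne : (List.range' 1 s).map a ≠ [] := by
    intro hh
    have := congrArg List.length hh
    simp at this
    omega
  refine ⟨fun p h1 h2 k => ?_, fun k => ?_, fun x hx => ?_⟩
  · have := h.1 (p - 1) (by omega) k
    rw [upList_getD a (p - 1) (by omega), upList_getD a (p - 1 + 1) (by omega)] at this
    rw [show 1 + (p - 1) = p by omega, show 1 + (p - 1 + 1) = p + 1 by omega] at this
    exact this
  · have := h.2.1 hne k
    have hlast : ((List.range' 1 s).map a).getLast hne = a s := by
      rw [List.getLast_eq_getElem]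
      simp only [List.length_map, List.length_range', List.getElem_map, List.getElem_range']
      congr 1
      omega
    have hhead : ((List.range' 1 s).map a).head hne = a 1 := by
      rw [List.head_eq_getElem]
      simp only [List.getElem_map, List.getElem_range']
    rw [hlast, hhead] at this
    rw [this]
    ring
  · apply h.2.2 x
    intro b hb
    simp only [List.mem_map, List.mem_range'] at hb
    obtain ⟨q, hq, hqb⟩ := hb
    have hq1 : 1 ≤ q ∧ q ≤ s := by omega
    rw [← hqb]
    exact hx q hq1.1 hq1.2

lemma cyc_down {n t : ℕ} (ht : 1 ≤ t) {al : ℕ → ℤ} {v : Equiv.Perm ℤ}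
    (h : IsCycleList n (((List.range' 1 t).map al).reverse) (-1) v) :
    (∀ q, 2 ≤ q → q ≤ t → ∀ k : ℤ, v (al q + k * n) = al (q - 1) + k * n) ∧
    (∀ k : ℤ, v (al 1 + k * n) = al t + (k - 1) * n) ∧
    (∀ x : ℤ, (∀ q, 1 ≤ q → q ≤ t → ¬ (n : ℤ) ∣ (x - al q)) → v x = x) := by
  have hne : ((List.range' 1 t).map al).reverse ≠ [] := by
    intro hh
    have := congrArg List.length hh
    simp at this
    omega
  refine ⟨fun q h1 h2 k => ?_, fun k => ?_, fun x hx => ?_⟩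
  · have := h.1 (t - q) (by simp; omega) k
    rw [downList_getD al (t - q) (by omega), downList_getD al (t - q + 1) (by omega)] at this
    rw [show t - (t - q) = q by omega, show t - (t - q + 1) = q - 1 by omega] at this
    exact this
  · have := h.2.1 hne k
    have hlast : (((List.range' 1 t).map al).reverse).getLast hne = al 1 := by
      rw [List.getLast_eq_getElem]
      simp only [List.length_reverse, List.length_map, List.length_range', List.getElem_reverse,
        List.getElem_map, List.getElem_range']
      congr 1
      omega
    have hhead : (((List.range' 1 t).map al).reverse).head hne = al t := by
      rw [List.head_eq_getElem]
      simp only [List.getElem_reverse, List.length_reverse, List.length_map, List.length_range',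
        List.getElem_map, List.getElem_range']
      congr 1
      omega
    rw [hlast, hhead] at this
    rw [this]
    ring
  · apply h.2.2 x
    intro b hb
    simp only [List.mem_reverse, List.mem_map, List.mem_range'] at hb
    obtain ⟨q, hq, hqb⟩ := hb
    have hq1 : 1 ≤ q ∧ q ≤ t := by omega
    rw [← hqb]
    exact hx q hq1.1 hq1.2


lemma per_of_action {n s : ℕ} {a : ℕ → ℤ} {u : Equiv.Perm ℤ}
    (h1 : ∀ q, 1 ≤ q → q ≤ s → ∃ b e : ℤ, ∀ k : ℤ, u (a q + k * n) = b + (k + e) * n)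
    (h3 : ∀ x : ℤ, (∀ q, 1 ≤ q → q ≤ s → ¬ (n : ℤ) ∣ (x - a q)) → u x = x) :
    IsPeriodic n u := by
  intro x
  by_cases hx : ∃ q, 1 ≤ q ∧ q ≤ s ∧ (n : ℤ) ∣ (x - a q)
  · obtain ⟨q, hq1, hq2, m, hm⟩ := hx
    have hxe : x = a q + m * n := by linarith [mul_comm (n : ℤ) m]
    obtain ⟨b, e, hb⟩ := h1 q hq1 hq2
    rw [show x + (n : ℤ) = a q + (m + 1) * n by rw [hxe]; ring, hxe, hb m, hb (m + 1)]
    ring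
  · push_neg at hx
    have h2 : ∀ q, 1 ≤ q → q ≤ s → ¬ (n : ℤ) ∣ (x + n - a q) := by
      intro q hq1 hq2 hd
      apply hx q hq1 hq2
      have he : x - a q = (x + n - a q) - 1 * n := by ring
      rw [he]
      exact dvd_sub hd ⟨1, by ring⟩
    rw [h3 x hx, h3 (x + n) h2]

lemma inj_of_mono {s : ℕ} {a : ℕ → ℤ} (h : ∀ i j, 1 ≤ i → i < j → j ≤ s → a i < a j) :
    ∀ p q, 1 ≤ p → p ≤ s → 1 ≤ q → q ≤ s → a p = a q → p = q := by
  intro p q hp1 hp2 hq1 hq2 he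
  rcases lt_trichotomy p q with h' | h' | h'
  · exact absurd he (ne_of_lt (h p q hp1 h' hq2))
  · exact h'
  · exact absurd he.symm (ne_of_lt (h q p hq1 h' hp2))

lemma core_finite (n s : ℕ) (hs : 1 ≤ s) (a : ℕ → ℤ)
    (hmem : ∀ p, 1 ≤ p → p ≤ s → 1 ≤ a p ∧ a p ≤ n)
    (hinj : ∀ p q, 1 ≤ p → p ≤ s → 1 ≤ q → q ≤ s → a p = a q → p = q)
    (w : Equiv.Perm ℤ) (hper : IsPeriodic n w)
    (hw1 : ∀ p, 1 ≤ p → p < s → ∀ k : ℤ, w (a p + k * n) = a (p + 1) + k * n)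
    (hw2 : ∀ k : ℤ, w (a s + k * n) = a 1 + (k + 1) * n)
    (i j : ℤ) (hij : ¬ (n : ℤ) ∣ (i - j)) (r : Equiv.Perm ℤ) (hr : IsTransposition n i j r)
    (p q : ℕ) (α β : ℤ) (hp1 : 1 ≤ p) (hp2 : p ≤ s) (hq1 : 1 ≤ q) (hq2 : q ≤ s)
    (hi : i = a p + α * n) (hj : j = a q + β * n) :
    {r' : Equiv.Perm ℤ | ∃ k : ℤ, r' = w ^ k * r * (w ^ k)⁻¹}.Finite ∧
    {r' : Equiv.Perm ℤ | ∃ k : ℤ, r' = w ^ k * r * (w ^ k)⁻¹}.ncard = s := by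
  have hn0 : (0 : ℤ) < n := by
    have := hmem p hp1 hp2; omega
  have hnz : ((n : ℤ)) ≠ 0 := by omega
  have hij' : i ≠ j := fun h => hij (h ▸ ⟨0, by ring⟩)
  have hsz : (0 : ℤ) < (s : ℤ) := by exact_mod_cast hs
  -- conjugation by w^s fixes r
  have hps := pow_s_eq hs hw1 hw2
  have hconj_s : w ^ ((s : ℤ)) * r * (w ^ ((s : ℤ)))⁻¹ = r := by
    have hper_s : IsPeriodic n (w ^ s) := per_pow hper s
    have h1 := conj_spec hper_s hr
    have e1 : (w ^ s) i = i + 1 * n := by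
      rw [hi, hps p hp1 hp2 α]; ring
    have e2 : (w ^ s) j = j + 1 * n := by
      rw [hj, hps q hq1 hq2 β]; ring
    rw [e1, e2] at h1
    have h2 := trsp_shift hr 1
    have := trsp_unique h1 h2
    rw [zpow_natCast]
    exact this
  have hCom : Commute (w ^ (s : ℤ)) r := by
    have h := hconj_s
    rw [mul_inv_eq_iff_eq_mul] at h
    exact h
  -- conjugation only depends on k mod s
  have key : ∀ (M k : ℤ), w ^ (k + (s : ℤ) * M) * r * (w ^ (k + (s : ℤ) * M))⁻¹
      = w ^ k * r * (w ^ k)⁻¹ := by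
    intro M k
    have h1 : w ^ (k + (s : ℤ) * M) = w ^ k * (w ^ (s : ℤ)) ^ M := by
      rw [zpow_add, zpow_mul]
    have h2 : (w ^ (s : ℤ)) ^ M * r * ((w ^ (s : ℤ)) ^ M)⁻¹ = r := by
      have hc := (hCom.zpow_left M).eq
      rw [hc, mul_assoc, mul_inv_cancel, mul_one]
    calc w ^ (k + (s : ℤ) * M) * r * (w ^ (k + (s : ℤ) * M))⁻¹
        = w ^ k * ((w ^ (s : ℤ)) ^ M * r * ((w ^ (s : ℤ)) ^ M)⁻¹) * (w ^ k)⁻¹ := by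
          rw [h1, mul_inv_rev]; group
      _ = w ^ k * r * (w ^ k)⁻¹ := by rw [h2]
  have hg_mod : ∀ k : ℤ, w ^ k * r * (w ^ k)⁻¹ = w ^ (k % (s : ℤ)) * r * (w ^ (k % (s : ℤ)))⁻¹ := by
    intro k
    have : k = k % (s : ℤ) + (s : ℤ) * (k / (s : ℤ)) := (Int.emod_add_mul_ediv k s).symm
    calc w ^ k * r * (w ^ k)⁻¹
        = w ^ (k % (s : ℤ) + (s : ℤ) * (k / (s : ℤ))) * r
          * (w ^ (k % (s : ℤ) + (s : ℤ) * (k / (s : ℤ))))⁻¹ := by rw [← this]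
      _ = _ := key _ _
  -- the set is the image of [0, s)
  have hset : {r' : Equiv.Perm ℤ | ∃ k : ℤ, r' = w ^ k * r * (w ^ k)⁻¹}
      = (fun k : ℤ => w ^ k * r * (w ^ k)⁻¹) '' (Set.Ico (0 : ℤ) (s : ℤ)) := by
    ext r'
    simp only [Set.mem_image, Set.mem_setOf_eq, Set.mem_Ico]
    constructor
    · rintro ⟨k, rfl⟩
      exact ⟨k % (s : ℤ), ⟨Int.emod_nonneg k (by omega), Int.emod_lt_of_pos k hsz⟩, (hg_mod k).symm⟩
    · rintro ⟨k, _, hk⟩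
      exact ⟨k, hk.symm⟩
  -- distinctness
  have main : ∀ k₁ k₂ : ℤ, 0 ≤ k₁ → k₁ < k₂ → k₂ < (s : ℤ) →
      w ^ k₁ * r * (w ^ k₁)⁻¹ ≠ w ^ k₂ * r * (w ^ k₂)⁻¹ := by
    intro k₁ k₂ hk1 hlt hk2 heq
    have hDconj : w ^ (k₂ - k₁) * r * (w ^ (k₂ - k₁))⁻¹ = r := by
      have h1 : w ^ (k₂ - k₁) = (w ^ k₁)⁻¹ * w ^ k₂ := by
        rw [show k₂ - k₁ = -k₁ + k₂ by ring, zpow_add, zpow_neg]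
      rw [h1, mul_inv_rev, inv_inv]
      calc (w ^ k₁)⁻¹ * w ^ k₂ * r * ((w ^ k₂)⁻¹ * w ^ k₁)
          = (w ^ k₁)⁻¹ * (w ^ k₂ * r * (w ^ k₂)⁻¹) * w ^ k₁ := by group
        _ = (w ^ k₁)⁻¹ * (w ^ k₁ * r * (w ^ k₁)⁻¹) * w ^ k₁ := by rw [heq]
        _ = r := by group
    set D : ℕ := (k₂ - k₁).toNat with hD
    have hDz : ((D : ℤ)) = k₂ - k₁ := Int.toNat_of_nonneg (by omega)
    have hD1 : 1 ≤ D := by omega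
    have hD2 : D < s := by omega
    have hzn : w ^ (k₂ - k₁) = w ^ (D : ℕ) := by rw [← hDz, zpow_natCast]
    rw [hzn] at hDconj
    have hspec : IsTransposition n ((w ^ D) i) ((w ^ D) j) r := by
      have := conj_spec (per_pow hper D) hr
      rwa [hDconj] at this
    obtain ⟨Q, cp, hQ1, hQ2, hQrel, hQfor⟩ := traj hs hw1 hw2 D p hp1 hp2
    obtain ⟨Q', cq, hQ'1, hQ'2, hQ'rel, hQ'for⟩ := traj hs hw1 hw2 D q hq1 hq2
    have ei : (w ^ D) i = a Q + (α + cp) * n := by rw [hi, hQfor α]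
    have ej : (w ^ D) j = a Q' + (β + cq) * n := by rw [hj, hQ'for β]
    have hne : (w ^ D) i ≠ (w ^ D) j := fun h => hij' ((w ^ D).injective h)
    rcases trsp_compat hij hne hr hspec with ⟨m₀, h1, h2⟩ | ⟨m₀, h1, h2⟩
    · -- w^D i = i + m₀ n : impossible
      rw [ei, hi] at h1
      have hdvd : (n : ℤ) ∣ a Q - a p := ⟨m₀ - cp, by linarith⟩
      have haQ : a Q = a p :=
        eq_of_dvd_range hdvd (hmem Q hQ1 hQ2).1 (hmem Q hQ1 hQ2).2 (hmem p hp1 hp2).1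
          (hmem p hp1 hp2).2
      have hQp : Q = p := hinj Q p hQ1 hQ2 hp1 hp2 haQ
      rw [hQp] at hQrel
      have hscp : (s : ℤ) * cp = D := by linarith
      rcases Nat.eq_zero_or_pos cp with h0 | h0
      · rw [h0] at hscp; simp at hscp; omega
      · have : (s : ℤ) * 1 ≤ (s : ℤ) * cp := by
          apply mul_le_mul_of_nonneg_left _ (le_of_lt hsz)
          exact_mod_cast h0
        have hDs : ((D : ℤ)) < s := by exact_mod_cast hD2
        linarith
    · -- w^D i = j + m₀ n ∧ w^D j = i + m₀ n : impossible
      rw [ei, hj] at h1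
      rw [ej, hi] at h2
      have hdvd1 : (n : ℤ) ∣ a Q - a q := ⟨β + m₀ - (α + cp), by linarith⟩
      have hdvd2 : (n : ℤ) ∣ a Q' - a p := ⟨α + m₀ - (β + cq), by linarith⟩
      have haQ1 : a Q = a q :=
        eq_of_dvd_range hdvd1 (hmem Q hQ1 hQ2).1 (hmem Q hQ1 hQ2).2 (hmem q hq1 hq2).1
          (hmem q hq1 hq2).2
      have haQ2 : a Q' = a p :=
        eq_of_dvd_range hdvd2 (hmem Q' hQ'1 hQ'2).1 (hmem Q' hQ'1 hQ'2).2 (hmem p hp1 hp2).1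
          (hmem p hp1 hp2).2
      have hQq : Q = q := hinj Q q hQ1 hQ2 hq1 hq2 haQ1
      have hQ'p : Q' = p := hinj Q' p hQ'1 hQ'2 hp1 hp2 haQ2
      rw [hQq] at hQrel
      rw [hQ'p] at hQ'rel
      -- cancel n in h1 h2
      have hc1 : α + (cp : ℤ) = β + m₀ := by
        have : (α + (cp : ℤ)) * n = (β + m₀) * n := by
          rw [haQ1] at h1; linarith
        exact mul_right_cancel₀ hnz this
      have hc2 : β + (cq : ℤ) = α + m₀ := by
        have : (β + (cq : ℤ)) * n = (α + m₀) * n := by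
          rw [haQ2] at h2; linarith
        exact mul_right_cancel₀ hnz this
      -- bounds on cp cq
      have hDs : ((D : ℤ)) < s := by exact_mod_cast hD2
      have hD1' : (1 : ℤ) ≤ D := by exact_mod_cast hD1
      have hbound : ∀ c : ℕ, (s : ℤ) * c < 2 * s → c ≤ 1 := by
        intro c hc
        by_contra hcc
        push_neg at hcc
        have : (s : ℤ) * 2 ≤ (s : ℤ) * c := by
          apply mul_le_mul_of_nonneg_left _ (le_of_lt hsz)
          exact_mod_cast hcc
        linarith
      have hq2' : (q : ℤ) ≤ s := by exact_mod_cast hq2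
      have hp2' : (p : ℤ) ≤ s := by exact_mod_cast hp2
      have hp1' : (1 : ℤ) ≤ p := by exact_mod_cast hp1
      have hq1' : (1 : ℤ) ≤ q := by exact_mod_cast hq1
      have hcp1 : cp ≤ 1 := hbound cp (by linarith)
      have hcq1 : cq ≤ 1 := hbound cq (by linarith)
      interval_cases cp <;> interval_cases cq <;>
        simp only [Nat.cast_zero, Nat.cast_one] at hc1 hc2 hQrel hQ'rel <;> omega
  have hinj2 : Set.InjOn (fun k : ℤ => w ^ k * r * (w ^ k)⁻¹) (Set.Ico (0 : ℤ) (s : ℤ)) := by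
    intro x hx y hy hxy
    simp only [Set.mem_Ico] at hx hy
    by_contra hne
    rcases lt_or_gt_of_ne hne with h | h
    · exact main x y hx.1 h hy.2 hxy
    · exact main y x hy.1 h hx.2 hxy.symm
  constructor
  · rw [hset]; exact (Set.finite_Ico _ _).image _
  · rw [hset, Set.ncard_image_of_injOn hinj2, ← Finset.coe_Ico, Set.ncard_coe_finset]
    simp

lemma core_infinite (n s t : ℕ) (hn : 0 < n) (hst : 0 < s + t)
    (w : Equiv.Perm ℤ) (hper : IsPeriodic n w)
    (i j : ℤ) (hij : ¬ (n : ℤ) ∣ (i - j)) (r : Equiv.Perm ℤ) (hr : IsTransposition n i j r)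
    (hiX : ∀ m : ℤ, (w ^ ((s : ℤ) * m)) i = i + m * n)
    (hjXi : ∀ m : ℤ, (w ^ ((t : ℤ) * m)) j = j - m * n) :
    {r' : Equiv.Perm ℤ | ∃ k : ℤ, r' = w ^ k * r * (w ^ k)⁻¹}.Infinite := by
  have hnz : ((n : ℤ)) ≠ 0 := by exact_mod_cast hn.ne'
  set f : ℤ → Equiv.Perm ℤ := fun m => w ^ ((s : ℤ) * (t : ℤ) * m) * r * (w ^ ((s : ℤ) * (t : ℤ) * m))⁻¹ with hf
  have hspec : ∀ m : ℤ, IsTransposition n (i + ((t : ℤ) * m) * n) (j - ((s : ℤ) * m) * n) (f m) := by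
    intro m
    have h1 := conj_spec (per_zpow hper ((s : ℤ) * (t : ℤ) * m)) hr
    have e1 : (w ^ ((s : ℤ) * (t : ℤ) * m)) i = i + ((t : ℤ) * m) * n := by
      rw [show (s : ℤ) * (t : ℤ) * m = (s : ℤ) * ((t : ℤ) * m) by ring]
      exact hiX _
    have e2 : (w ^ ((s : ℤ) * (t : ℤ) * m)) j = j - ((s : ℤ) * m) * n := by
      rw [show (s : ℤ) * (t : ℤ) * m = (t : ℤ) * ((s : ℤ) * m) by ring]
      exact hjXi _
    rw [e1, e2] at h1
    exact h1
  apply Set.infinite_of_injective_forall_mem (f := f)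
  · intro m₁ m₂ heq
    have hne : ∀ m : ℤ, i + ((t : ℤ) * m) * n ≠ j - ((s : ℤ) * m) * n := by
      intro m hc
      exact hij ⟨-((t : ℤ) * m) - (s : ℤ) * m, by linarith⟩
    have hd1 : ¬ (n : ℤ) ∣ (i + ((t : ℤ) * m₁) * n) - (j - ((s : ℤ) * m₁) * n) := by
      rintro ⟨c, hc⟩
      exact hij ⟨c - (t : ℤ) * m₁ - (s : ℤ) * m₁, by linarith⟩
    have h2 := hspec m₂
    rw [← heq] at h2
    rcases trsp_compat hd1 (hne m₂) (hspec m₁) h2 with ⟨μ, h1, h2'⟩ | ⟨μ, h1, _⟩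
    · have e1 : ((t : ℤ) * m₂) * n = ((t : ℤ) * m₁ + μ) * n := by linarith
      have e2 : (-(s : ℤ) * m₂) * n = (-(s : ℤ) * m₁ + μ) * n := by linarith
      have e1' := mul_right_cancel₀ hnz e1
      have e2' := mul_right_cancel₀ hnz e2
      have key : ((s : ℤ) + t) * (m₂ - m₁) = 0 := by linear_combination e1' - e2'
      have hst' : ((s : ℤ) + t) ≠ 0 := by
        have : (0 : ℤ) < (s : ℤ) + t := by exact_mod_cast hst
        omega
      rcases mul_eq_zero.mp key with h | h
      · exact absurd h hst'
      · omega
    · exfalso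
      apply hij
      exact ⟨μ - (t : ℤ) * m₂ - (s : ℤ) * m₁, by linarith⟩
  · intro m
    exact ⟨(s : ℤ) * (t : ℤ) * m, rfl⟩


theorem statement15 (n : ℕ) (hn : 2 ≤ n) (c : Equiv.Perm ℤ) (hcox : IsCoxeter n c)
    (d : CoxeterDecomp n c) (i j : ℤ) (hij : ¬ (n : ℤ) ∣ (i - j))
    (r : Equiv.Perm ℤ) (hr : IsTransposition n i j r) (hdvd : RDvd n r c) :
    (i ∈ latticeSet n d.s d.a → j ∈ latticeSet n d.s d.a →
      ({r' : Equiv.Perm ℤ | ∃ k : ℤ, r' = c ^ k * r * (c ^ k)⁻¹}.Finite ∧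
        {r' : Equiv.Perm ℤ | ∃ k : ℤ, r' = c ^ k * r * (c ^ k)⁻¹}.ncard = d.s)) ∧
    (i ∈ latticeSet n d.t d.al → j ∈ latticeSet n d.t d.al →
      ({r' : Equiv.Perm ℤ | ∃ k : ℤ, r' = c ^ k * r * (c ^ k)⁻¹}.Finite ∧
        {r' : Equiv.Perm ℤ | ∃ k : ℤ, r' = c ^ k * r * (c ^ k)⁻¹}.ncard = d.t)) ∧
    (((i ∈ latticeSet n d.s d.a ∧ j ∈ latticeSet n d.t d.al) ∨
        (i ∈ latticeSet n d.t d.al ∧ j ∈ latticeSet n d.s d.a)) →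
      {r' : Equiv.Perm ℤ | ∃ k : ℤ, r' = c ^ k * r * (c ^ k)⁻¹}.Infinite) := by
  obtain ⟨s, t, a, al, u, v, hs, ht, hst, ha_mono, hal_mono, ha_mem, hal_mem, hdisj, hcover,
    hu, hv, hc⟩ := d
  have hn0 : 0 < n := by omega
  have hup := cyc_up hs hu
  have hdown := cyc_down ht hv
  have hainj := inj_of_mono ha_mono
  have halinj := inj_of_mono hal_mono
  have hndvd_al : ∀ p q, 1 ≤ p → p ≤ s → 1 ≤ q → q ≤ t → ∀ k : ℤ,
      ¬ (n : ℤ) ∣ (a p + k * n - al q) := by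
    intro p q hp1 hp2 hq1 hq2 k hd
    have h0 : (n : ℤ) ∣ (a p - al q) := by
      have he : a p - al q = (a p + k * n - al q) - k * n := by ring
      rw [he]
      exact dvd_sub hd ⟨k, by ring⟩
    exact not_dvd_of_ne (hdisj p q hp1 hp2 hq1 hq2) (ha_mem p hp1 hp2).1 (ha_mem p hp1 hp2).2
      (hal_mem q hq1 hq2).1 (hal_mem q hq1 hq2).2 h0
  have hndvd_a : ∀ q p, 1 ≤ q → q ≤ t → 1 ≤ p → p ≤ s → ∀ k : ℤ,
      ¬ (n : ℤ) ∣ (al q + k * n - a p) := by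
    intro q p hq1 hq2 hp1 hp2 k hd
    have h0 : (n : ℤ) ∣ (al q - a p) := by
      have he : al q - a p = (al q + k * n - a p) - k * n := by ring
      rw [he]
      exact dvd_sub hd ⟨k, by ring⟩
    exact not_dvd_of_ne (Ne.symm (hdisj p q hp1 hp2 hq1 hq2)) (hal_mem q hq1 hq2).1
      (hal_mem q hq1 hq2).2 (ha_mem p hp1 hp2).1 (ha_mem p hp1 hp2).2 h0
  have hc1 : ∀ p, 1 ≤ p → p < s → ∀ k : ℤ, c (a p + k * n) = a (p + 1) + k * n := by
    intro p h1 h2 k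
    rw [hc, Equiv.Perm.mul_apply]
    rw [hdown.2.2 _ (fun q hq1 hq2 => hndvd_al p q h1 (by omega) hq1 hq2 k)]
    exact hup.1 p h1 h2 k
  have hc2 : ∀ k : ℤ, c (a s + k * n) = a 1 + (k + 1) * n := by
    intro k
    rw [hc, Equiv.Perm.mul_apply]
    rw [hdown.2.2 _ (fun q hq1 hq2 => hndvd_al s q hs le_rfl hq1 hq2 k)]
    exact hup.2.1 k
  have per_u : IsPeriodic n u := by
    apply per_of_action (s := s) (a := a) _ hup.2.2
    intro q hq1 hq2
    by_cases hqs : q < s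
    · exact ⟨a (q + 1), 0, fun k => by rw [hup.1 q hq1 hqs k]; ring⟩
    · have hq : q = s := by omega
      subst hq
      exact ⟨a 1, 1, fun k => hup.2.1 k⟩
  have per_v : IsPeriodic n v := by
    apply per_of_action (s := t) (a := al) _ hdown.2.2
    intro q hq1 hq2
    by_cases hq2' : 2 ≤ q
    · exact ⟨al (q - 1), 0, fun k => by rw [hdown.1 q hq2' hq2 k]; ring⟩
    · have hq : q = 1 := by omega
      subst hq
      exact ⟨al t, -1, fun k => by rw [hdown.2.1 k]; ring⟩
  have per_c : IsPeriodic n c := by rw [hc]; exact per_mul per_u per_v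
  have per_ci : IsPeriodic n c⁻¹ := per_inv per_c
  have hufix : ∀ q, 1 ≤ q → q ≤ t → ∀ k : ℤ, u (al q + k * n) = al q + k * n := by
    intro q hq1 hq2 k
    exact hup.2.2 _ (fun p hp1 hp2 => hndvd_a q p hq1 hq2 hp1 hp2 k)
  have hci1 : ∀ p, 1 ≤ p → p < t → ∀ k : ℤ, c⁻¹ (al p + k * n) = al (p + 1) + k * n := by
    intro p h1 h2 k
    rw [hc, mul_inv_rev, Equiv.Perm.mul_apply]
    have huinv : u⁻¹ (al p + k * n) = al p + k * n := by
      have h0 : u⁻¹ (al p + k * n) = u⁻¹ (u (al p + k * n)) := by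
        rw [hufix p h1 (by omega) k]
      rw [h0, perm_inv_apply_self]
    rw [huinv]
    have hvstep : v (al (p + 1) + k * n) = al p + k * n := by
      have h4 := hdown.1 (p + 1) (by omega) (by omega) k
      rw [show p + 1 - 1 = p by omega] at h4
      exact h4
    rw [← hvstep, perm_inv_apply_self]
  have hci2 : ∀ k : ℤ, c⁻¹ (al t + k * n) = al 1 + (k + 1) * n := by
    intro k
    rw [hc, mul_inv_rev, Equiv.Perm.mul_apply]
    have huinv : u⁻¹ (al t + k * n) = al t + k * n := by
      have h0 : u⁻¹ (al t + k * n) = u⁻¹ (u (al t + k * n)) := by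
        rw [hufix t ht le_rfl k]
      rw [h0, perm_inv_apply_self]
    rw [huinv]
    have hvstep : v (al 1 + (k + 1) * n) = al t + k * n := by
      rw [hdown.2.1 (k + 1)]
      ring_nf
    rw [← hvstep, perm_inv_apply_self]
  have hpowinv : ∀ k : ℤ, (c⁻¹) ^ (-k) = c ^ k := by
    intro k
    rw [inv_zpow, ← zpow_neg, neg_neg]
  have hSinv : {r' : Equiv.Perm ℤ | ∃ k : ℤ, r' = c ^ k * r * (c ^ k)⁻¹}
      = {r' : Equiv.Perm ℤ | ∃ k : ℤ, r' = (c⁻¹) ^ k * r * ((c⁻¹) ^ k)⁻¹} := by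
    ext r'
    simp only [Set.mem_setOf_eq]
    constructor
    · rintro ⟨k, rfl⟩
      exact ⟨-k, by rw [hpowinv k]⟩
    · rintro ⟨k, rfl⟩
      exact ⟨-k, by rw [← hpowinv (-k), neg_neg]⟩
  refine ⟨?_, ?_, ?_⟩
  · rintro ⟨p, hp1, hp2, kα, hik⟩ ⟨q, hq1, hq2, kβ, hjk⟩
    exact core_finite n s hs a ha_mem hainj c per_c hc1 hc2 i j hij r hr p q kα kβ
      hp1 hp2 hq1 hq2 hik hjk
  · rintro ⟨p, hp1, hp2, kα, hik⟩ ⟨q, hq1, hq2, kβ, hjk⟩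
    rw [hSinv]
    exact core_finite n t ht al hal_mem halinj c⁻¹ per_ci hci1 hci2 i j hij r hr p q kα kβ
      hp1 hp2 hq1 hq2 hik hjk
  · rintro (⟨⟨p, hp1, hp2, kα, hik⟩, ⟨q, hq1, hq2, kβ, hjk⟩⟩ |
      ⟨⟨q, hq1, hq2, kβ, hik⟩, ⟨p, hp1, hp2, kα, hjk⟩⟩)
    · apply core_infinite n s t hn0 (by omega) c per_c i j hij r hr
      · intro m
        rw [hik, zpow_mult hs hc1 hc2 m p hp1 hp2 kα]
        ring
      · intro m
        have h0 := zpow_mult ht hci1 hci2 (-m) q hq1 hq2 kβ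
        have he : (c⁻¹) ^ ((t : ℤ) * (-m)) = c ^ ((t : ℤ) * m) := by
          rw [show (t : ℤ) * (-m) = -((t : ℤ) * m) by ring, hpowinv]
        rw [he] at h0
        rw [hjk, h0]
        ring
    · rw [hSinv]
      apply core_infinite n t s hn0 (by omega) c⁻¹ per_ci i j hij r hr
      · intro m
        rw [hik, zpow_mult ht hci1 hci2 m q hq1 hq2 kβ]
        ring
      · intro m
        have h0 := zpow_mult hs hc1 hc2 ((-m)) p hp1 hp2 kα
        have he : (c⁻¹) ^ ((s : ℤ) * m) = c ^ ((s : ℤ) * (-m)) := by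
          rw [inv_zpow, ← zpow_neg]
          congr 1
          ring
        rw [hjk, he, h0]
        ring
end
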